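/- arXiv:1202.3276 — 3 statements merged into one kernel-verified Lean document; each statement's English description precedes it below -/
import Mathlib

section
/- Let Γ be a connected, locally finite, accessible graph with Aut(Γ)\Γ finite. Then: (1) for every C ∈ C_opt the block B[C] is connected; (2) there is a number ℓ ∈ ℕ such that for all C ∈ C_opt and all S ⊆ B[C]: whenever two vertices u, v ∈ B[C] \ N^ℓS can be connected by a path in Γ − N^ℓS, they can be connected by a path in B[C] \ S. -/
open Pointwise

universe u

namespace CFGroups

variable {V : Type u}

/-- The edge boundary of `C`: adjacent ordered pairs `(u,v)` with `u ∈ C`, `v ∉ C`.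
These are in canonical bijection with the undirected edges of `δC`. -/
def edgeBoundary (G : SimpleGraph V) (C : Set V) : Set (V × V) :=
  {p : V × V | G.Adj p.1 p.2 ∧ p.1 ∈ C ∧ p.2 ∉ C}

/-- The vertex boundary `βC`: endpoints of edges of `δC`. -/
def vertexBoundary (G : SimpleGraph V) (C : Set V) : Set V :=
  {u : V | ∃ v : V, G.Adj u v ∧ ((u ∈ C ∧ v ∉ C) ∨ (v ∈ C ∧ u ∉ C))}

/-- A cut: `C` and its complement are nonempty and connected, and `δC` is finite. -/
def IsCut (G : SimpleGraph V) (C : Set V) : Prop :=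
  C.Nonempty ∧ Cᶜ.Nonempty ∧ (G.induce C).Connected ∧ (G.induce Cᶜ).Connected ∧
    (edgeBoundary G C).Finite

/-- The weight `|δC|` of a cut. -/
noncomputable def weight (G : SimpleGraph V) (C : Set V) : ℕ :=
  (edgeBoundary G C).ncard

/-- A `k`-cut: a cut of weight at most `k`. -/
def IsCutLe (G : SimpleGraph V) (k : ℕ) (C : Set V) : Prop :=
  IsCut G C ∧ weight G C ≤ k

/-- Two cuts are nested. -/
def Nested (C D : Set V) : Prop :=
  C ⊆ D ∨ C ⊆ Dᶜ ∨ Cᶜ ⊆ D ∨ Cᶜ ⊆ Dᶜ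

/-- A bi-infinite simple path, as an injective `ℤ`-indexed sequence of successively
adjacent vertices. -/
def IsBiInfinitePath (G : SimpleGraph V) (α : ℤ → V) : Prop :=
  Function.Injective α ∧ ∀ i : ℤ, G.Adj (α i) (α (i + 1))

/-- A one-sided infinite simple path. -/
def IsRayPath (G : SimpleGraph V) (γ : ℕ → V) : Prop :=
  Function.Injective γ ∧ ∀ i : ℕ, G.Adj (γ i) (γ (i + 1))

/-- `C(α)`: the cuts splitting the bi-infinite simple path `α` into two infinite pieces. -/
def cutsSplitting (G : SimpleGraph V) (α : ℤ → V) : Set (Set V) :=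
  {C : Set V | IsCut G C ∧ (Set.range α ∩ C).Infinite ∧ (Set.range α ∩ Cᶜ).Infinite}

/-- `C_min(α)`: the cuts of minimal weight in `C(α)`. -/
def cutsMin (G : SimpleGraph V) (α : ℤ → V) : Set (Set V) :=
  {C ∈ cutsSplitting G α | ∀ D ∈ cutsSplitting G α, weight G C ≤ weight G D}

/-- `Γ` is accessible with constant `k`: every bi-infinite simple path with `C(α) ≠ ∅`
admits a `k`-cut in `C(α)`. -/
def AccessibleWith (G : SimpleGraph V) (k : ℕ) : Prop :=
  ∀ α : ℤ → V, IsBiInfinitePath G α → (cutsSplitting G α).Nonempty →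
    ∃ C ∈ cutsSplitting G α, weight G C ≤ k

/-- An accessible graph. -/
def Accessible (G : SimpleGraph V) : Prop := ∃ k : ℕ, AccessibleWith G k

/-- `m(C)`: the number of `k`-cuts not nested with `C`. -/
noncomputable def mdeg (G : SimpleGraph V) (k : ℕ) (C : Set V) : ℕ :=
  Set.ncard {D : Set V | IsCutLe G k D ∧ ¬ Nested C D}

/-- `C_opt(α)`: the cuts of `C_min(α)` minimizing `m`. -/
def cutsOpt (G : SimpleGraph V) (k : ℕ) (α : ℤ → V) : Set (Set V) :=
  {C ∈ cutsMin G α | ∀ D ∈ cutsMin G α, mdeg G k C ≤ mdeg G k D}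

/-- `C_opt`: the optimally nested cuts. -/
def COpt (G : SimpleGraph V) (k : ℕ) : Set (Set V) :=
  {C : Set V | ∃ α : ℤ → V, IsBiInfinitePath G α ∧ C ∈ cutsOpt G k α}

/-- The relation `C ∼ D` on optimal cuts. -/
def SimRel (G : SimpleGraph V) (k : ℕ) (C D : Set V) : Prop :=
  C = D ∨ (Cᶜ ⊂ D ∧ ∀ E ∈ COpt G k, Cᶜ ⊂ E → E ⊆ D → E = D)

/-- The equivalence class `[C]` of an optimal cut `C` under `∼`. -/
def cls (G : SimpleGraph V) (k : ℕ) (C : Set V) : Set (Set V) :=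
  {D ∈ COpt G k | SimRel G k C D}

/-- The structure tree `T(C_opt)`: vertices are the classes `[C]`, `C ∈ C_opt`, and for each
`C ∈ C_opt` there is an edge joining `[C]` and `[C*]`. -/
def structureTree (G : SimpleGraph V) (k : ℕ) :
    SimpleGraph {S : Set (Set V) // ∃ C ∈ COpt G k, S = cls G k C} where
  Adj X Y := X ≠ Y ∧ ∃ C ∈ COpt G k,
    (X.1 = cls G k C ∧ Y.1 = cls G k Cᶜ) ∨ (Y.1 = cls G k C ∧ X.1 = cls G k Cᶜ)
  symm := ⟨by
    rintro X Y ⟨hne, C, hC, h⟩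
    exact ⟨hne.symm, C, hC, h.symm⟩⟩
  loopless := ⟨fun X h => h.1 rfl⟩

/-- A locally finite graph. -/
def LocallyFiniteGraph (G : SimpleGraph V) : Prop :=
  ∀ v : V, (G.neighborSet v).Finite

/-- The `r`-th neighbourhood `N^r S` of a set of vertices. -/
def nbhd (G : SimpleGraph V) (r : ℕ) (S : Set V) : Set V :=
  {v : V | ∃ u ∈ S, G.dist v u ≤ r}

/-- The block `B[C] = ⋂_{D ∼ C} N^κ D` assigned to the vertex `[C]` of the structure tree. -/
def block (G : SimpleGraph V) (k κ : ℕ) (C : Set V) : Set V :=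
  ⋂ D ∈ cls G k C, nbhd G κ D

/-- `Aut(Γ)\Γ` is finite: the automorphism group of `Γ` acts with finitely many
vertex orbits and finitely many edge orbits. -/
def AutFinOrbits (G : SimpleGraph V) : Prop :=
  (Set.range fun v : V => Set.range fun φ : G ≃g G => φ v).Finite ∧
  (Set.range fun e : G.edgeSet => Set.range fun φ : G ≃g G => Sym2.map ⇑φ e.1).Finite

/-- A group `H` (equipped with an action on the vertices) acts on the graph `G`
by graph automorphisms. -/
def ActsOn (G : SimpleGraph V) (H : Type u) [Group H] [MulAction H V] : Prop :=
  ∀ (g : H) (u v : V), G.Adj u v ↔ G.Adj (g • u) (g • v)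

/-- `G\Γ` is finite: finitely many vertex orbits and finitely many edge orbits. -/
def ActFinOrbits (G : SimpleGraph V) (H : Type u) [Group H] [MulAction H V] : Prop :=
  (Set.range fun v : V => Set.range fun g : H => g • v).Finite ∧
  (Set.range fun e : G.edgeSet => Set.range fun g : H => Sym2.map (fun v => g • v) e.1).Finite

/-- The graph has more than one end: some finite vertex set can be removed so that at least
two infinite connected components remain. -/
def MoreThanOneEnd (G : SimpleGraph V) : Prop :=
  ∃ S : Set V, S.Finite ∧ ∃ K₁ K₂ : (G.induce Sᶜ).ConnectedComponent,
    K₁ ≠ K₂ ∧ K₁.supp.Infinite ∧ K₂.supp.Infinite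

/-- The Cayley graph of a group w.r.t. a generating set `S` (edges labelled by `S ∪ S⁻¹`). -/
def cayleyGraph (K : Type u) [Group K] (S : Set K) : SimpleGraph K where
  Adj g h := g ≠ h ∧ (g⁻¹ * h ∈ S ∨ h⁻¹ * g ∈ S)
  symm := ⟨by rintro g h ⟨hne, hs⟩; exact ⟨hne.symm, hs.symm⟩⟩
  loopless := ⟨fun g h => h.1 rfl⟩

/-- A finitely generated group all of whose Cayley graphs have at most one end. -/
def FGOneEnded (K : Type u) [Group K] : Prop :=
  Group.FG K ∧ ∀ S : Set K, S.Finite → Subgroup.closure S = ⊤ →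
    ¬ MoreThanOneEnd (cayleyGraph K S)

/-- An accessible group: it acts on a tree with finitely many orbits, finite edge
stabilizers, and all vertex stabilizers finitely generated with at most one end. -/
def GroupAccessible (K : Type u) [Group K] : Prop :=
  ∃ (T : Type u) (tr : SimpleGraph T) (φ : K →* Equiv.Perm T),
    tr.IsTree ∧
    (∀ (g : K) (u v : T), tr.Adj u v ↔ tr.Adj (φ g u) (φ g v)) ∧
    (Set.range fun t : T => Set.range fun g : K => φ g t).Finite ∧
    (Set.range fun e : tr.edgeSet => Set.range fun g : K => Sym2.map ⇑(φ g) e.1).Finite ∧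
    (∀ e ∈ tr.edgeSet, {g : K | Sym2.map ⇑(φ g) e = e}.Finite) ∧
    (∀ t : T, ∃ L : Subgroup K, (L : Set K) = {g : K | φ g t = t} ∧ FGOneEnded ↥L)

/-- A tree decomposition of `G`. -/
def IsTreeDecomp (G : SimpleGraph V) {T : Type u} (tr : SimpleGraph T) (X : T → Set V) : Prop :=
  tr.IsTree ∧ (∀ v : V, ∃ t : T, v ∈ X t) ∧
  (∀ u v : V, G.Adj u v → ∃ t : T, u ∈ X t ∧ v ∈ X t) ∧
  (∀ v : V, (tr.induce {t : T | v ∈ X t}).Connected)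

/-- `G` has treewidth at most `w`. -/
def TreewidthAtMost (G : SimpleGraph V) (w : ℕ) : Prop :=
  ∃ (T : Type u) (tr : SimpleGraph T) (X : T → Set V),
    IsTreeDecomp G tr X ∧ ∀ t : T, (X t).Finite ∧ (X t).ncard ≤ w + 1

/-- `G` has finite treewidth. -/
def FiniteTreewidth (G : SimpleGraph V) : Prop := ∃ w : ℕ, TreewidthAtMost G w

/-- Uniformly bounded vertex degrees. -/
def UnifBoundedDegree (G : SimpleGraph V) : Prop :=
  ∃ d : ℕ, ∀ v : V, (G.neighborSet v).Finite ∧ (G.neighborSet v).ncard ≤ d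

/-- A class of groups (in universe `u`), as a property of groups. -/
def VirtuallyIn (𝒢 : (K : Type u) → [inst : Group K] → Prop) (K : Type u) [Group K] : Prop :=
  ∃ L : Subgroup K, L.FiniteIndex ∧ 𝒢 ↥L

/-- `K` has a quasi-isometric section: for some monoid presentation `π : Σ* → K` with
finite alphabet there is a section `σ` of `π` with `σ(1) = ε` which is quasi-isometric
w.r.t. the tree metric on `Σ*`; `d(u,v) ≤ k` is expressed via a common prefix
decomposition `u = p u'`, `v = p v'` with `|u'| + |v'| ≤ k`. -/
def HasQIS (K : Type u) [Group K] : Prop :=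
  ∃ (A : Type u) (_ : Finite A) (π : List A → K),
    (∀ u v : List A, π (u ++ v) = π u * π v) ∧ π [] = 1 ∧ Function.Surjective π ∧
    ∃ (σ : K → List A) (k : ℕ), 1 ≤ k ∧ σ 1 = [] ∧ (∀ g : K, π (σ g) = g) ∧
      ∀ (g : K) (a : A), ∃ p u' v' : List A,
        σ g = p ++ u' ∧ σ (g * π [a]) = p ++ v' ∧ u'.length + v'.length ≤ k

/-- A context-free group: the word problem w.r.t. some surjective monoid presentation
over a finite alphabet is a context-free language. -/
def IsContextFreeGroup (K : Type u) [Group K] : Prop :=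
  ∃ (A : Type u) (_ : Finite A) (π : List A → K),
    (∀ u v : List A, π (u ++ v) = π u * π v) ∧ π [] = 1 ∧ Function.Surjective π ∧
    Language.IsContextFree ({w : List A | π w = 1} : Language A)


section Toolbox

variable {G : SimpleGraph V}

/-- A walk whose support lies in `S`. -/
def WalkIn (G : SimpleGraph V) (S : Set V) (x y : V) : Prop :=
  ∃ p : G.Walk x y, ∀ w ∈ p.support, w ∈ S

lemma WalkIn.mono {S T : Set V} {x y : V} (h : WalkIn G S x y) (hST : S ⊆ T) :
    WalkIn G T x y := by
  obtain ⟨p, hp⟩ := h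
  exact ⟨p, fun w hw => hST (hp w hw)⟩

lemma WalkIn.symm {S : Set V} {x y : V} (h : WalkIn G S x y) : WalkIn G S y x := by
  obtain ⟨p, hp⟩ := h
  exact ⟨p.reverse, fun w hw => hp w (by simpa [SimpleGraph.Walk.support_reverse] using hw)⟩

lemma WalkIn.trans {S : Set V} {x y z : V} (h : WalkIn G S x y) (h' : WalkIn G S y z) :
    WalkIn G S x z := by
  obtain ⟨p, hp⟩ := h
  obtain ⟨q, hq⟩ := h'
  refine ⟨p.append q, fun w hw => ?_⟩
  rw [SimpleGraph.Walk.support_append] at hw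
  rcases List.mem_append.1 hw with hw | hw
  · exact hp w hw
  · exact hq w (List.mem_of_mem_tail hw)

lemma WalkIn.mem_left {S : Set V} {x y : V} (h : WalkIn G S x y) : x ∈ S := by
  obtain ⟨p, hp⟩ := h; exact hp x p.start_mem_support

lemma WalkIn.mem_right {S : Set V} {x y : V} (h : WalkIn G S x y) : y ∈ S := by
  obtain ⟨p, hp⟩ := h; exact hp y p.end_mem_support

lemma walkIn_of_adj {S : Set V} {x y : V} (h : G.Adj x y) (hx : x ∈ S) (hy : y ∈ S) :
    WalkIn G S x y := by
  refine ⟨SimpleGraph.Walk.cons h SimpleGraph.Walk.nil, ?_⟩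
  intro w hw
  simp only [SimpleGraph.Walk.support_cons, SimpleGraph.Walk.support_nil, List.mem_cons,
    List.mem_singleton] at hw
  rcases hw with rfl | hw
  · exact hx
  · rcases hw with rfl | h; · exact hy
    · exact absurd h List.not_mem_nil

lemma walkIn_refl {S : Set V} {x : V} (hx : x ∈ S) : WalkIn G S x x :=
  ⟨SimpleGraph.Walk.nil, by
    intro w hw
    simp only [SimpleGraph.Walk.support_nil, List.mem_singleton] at hw
    subst hw; exact hx⟩

/-- Transfer a walk in `G` with support in `S` to reachability in the induced graph. -/
lemma walkIn_induce_reachable {S : Set V} :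
    ∀ {x y : V} (p : G.Walk x y) (_ : ∀ w ∈ p.support, w ∈ S)
      (hx : x ∈ S) (hy : y ∈ S), (G.induce S).Reachable ⟨x, hx⟩ ⟨y, hy⟩ := by
  intro x y p
  induction p with
  | nil => intro _ hx _; rfl
  | @cons a b c hab p ih =>
    intro hsup ha hc
    have hb : b ∈ S := hsup b (by simp [SimpleGraph.Walk.support_cons])
    have h1 : (G.induce S).Adj ⟨a, ha⟩ ⟨b, hb⟩ := hab
    have hsub : ∀ w ∈ p.support, w ∈ S := by
      intro w hw
      exact hsup w (by simp only [SimpleGraph.Walk.support_cons, List.mem_cons]; right; exact hw)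
    exact (SimpleGraph.Adj.reachable h1).trans (ih hsub hb hc)

/-- The inclusion homomorphism from an induced subgraph. -/
def induceHom' (G : SimpleGraph V) (S : Set V) : G.induce S →g G where
  toFun := Subtype.val
  map_rel' := fun h => h

lemma induce_connected_iff_walkIn {S : Set V} :
    (G.induce S).Connected ↔ S.Nonempty ∧ ∀ x ∈ S, ∀ y ∈ S, WalkIn G S x y := by
  constructor
  · intro h
    have hne : S.Nonempty := by
      obtain ⟨⟨x, hx⟩⟩ := h.nonempty
      exact ⟨x, hx⟩
    refine ⟨hne, fun x hx y hy => ?_⟩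
    obtain ⟨p⟩ := h.preconnected ⟨x, hx⟩ ⟨y, hy⟩
    refine ⟨p.map (induceHom' G S), fun w hw => ?_⟩
    replace hw : w ∈ (p.map (induceHom' G S)).support := hw
    rw [SimpleGraph.Walk.support_map (induceHom' G S) p] at hw
    obtain ⟨⟨w', hw'⟩, _, rfl⟩ := List.mem_map.1 hw
    exact hw'
  · rintro ⟨⟨x₀, hx₀⟩, h⟩
    have hne : Nonempty ↥S := ⟨⟨x₀, hx₀⟩⟩
    rw [SimpleGraph.connected_iff]
    refine ⟨fun a b => ?_, hne⟩
    obtain ⟨a, ha⟩ := a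
    obtain ⟨b, hb⟩ := b
    obtain ⟨p, hp⟩ := h a ha b hb
    exact walkIn_induce_reachable p hp ha hb

/-- Any walk from inside `X` to outside `X` crosses the boundary, within its support. -/
lemma exists_boundary_of_walk {X : Set V} :
    ∀ {x y : V} (p : G.Walk x y) (_ : x ∈ X) (_ : y ∉ X),
      ∃ a b, G.Adj a b ∧ a ∈ X ∧ b ∉ X ∧ a ∈ p.support ∧ b ∈ p.support := by
  intro x y p
  induction p with
  | nil => intro hx hy; exact absurd hx hy
  | @cons a b c hab p ih =>
    intro ha hc
    by_cases hb : b ∈ X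
    · obtain ⟨a', b', h1, h2, h3, h4, h5⟩ := ih hb hc
      exact ⟨a', b', h1, h2, h3, by simp [SimpleGraph.Walk.support_cons]; right; exact h4,
        by simp [SimpleGraph.Walk.support_cons]; right; exact h5⟩
    · exact ⟨a, b, hab, ha, hb, by simp [SimpleGraph.Walk.support_cons],
        by simp [SimpleGraph.Walk.support_cons]⟩

/-- From a connected set containing points inside and outside `X`, get a boundary edge
with both endpoints in the set. -/
lemma exists_boundary_in_set {S X : Set V} (hS : (G.induce S).Connected)
    {x y : V} (hx : x ∈ S) (hy : y ∈ S) (hxX : x ∈ X) (hyX : y ∉ X) :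
    ∃ a b, G.Adj a b ∧ a ∈ X ∧ b ∉ X ∧ a ∈ S ∧ b ∈ S := by
  obtain ⟨p, hp⟩ := (induce_connected_iff_walkIn.1 hS).2 x hx y hy
  obtain ⟨a, b, h1, h2, h3, h4, h5⟩ := exists_boundary_of_walk p hxX hyX
  exact ⟨a, b, h1, h2, h3, hp a h4, hp b h5⟩

end Toolbox


section Toolbox2
variable {G : SimpleGraph V}

lemma nested_comm {C D : Set V} : Nested C D ↔ Nested D C := by
  unfold Nested
  constructor <;>
  · rintro (h | h | h | h)
    · exact Or.inr (Or.inr (Or.inr (Set.compl_subset_compl.2 h)))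
    · exact Or.inr (Or.inl (Set.subset_compl_comm.1 h))
    · exact Or.inr (Or.inr (Or.inl (Set.compl_subset_comm.1 h)))
    · exact Or.inl (Set.compl_subset_compl.1 h)

lemma nested_compl_right {C D : Set V} : Nested C Dᶜ ↔ Nested C D := by
  unfold Nested
  rw [compl_compl]
  tauto

lemma nested_compl_left {C D : Set V} : Nested Cᶜ D ↔ Nested C D := by
  unfold Nested
  rw [compl_compl]
  tauto

lemma nested_of_subset {C D : Set V} (h : C ⊆ D) : Nested C D := Or.inl h

lemma not_nested_corners {C D : Set V} (h : ¬ Nested C D) :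
    (C ∩ D).Nonempty ∧ (C ∩ Dᶜ).Nonempty ∧ (Cᶜ ∩ D).Nonempty ∧ (Cᶜ ∩ Dᶜ).Nonempty := by
  unfold Nested at h
  push_neg at h
  obtain ⟨h1, h2, h3, h4⟩ := h
  rw [Set.not_subset] at h1 h2 h3 h4
  obtain ⟨a, ha1, ha2⟩ := h2
  obtain ⟨b, hb1, hb2⟩ := h1
  obtain ⟨c, hc1, hc2⟩ := h4
  obtain ⟨d, hd1, hd2⟩ := h3
  refine ⟨⟨a, ha1, by simpa using ha2⟩, ⟨b, hb1, hb2⟩, ⟨c, hc1, by simpa using hc2⟩, ⟨d, hd1, hd2⟩⟩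

/-- The ordered edge boundary of the complement is the swap of the boundary. -/
lemma edgeBoundary_compl (G : SimpleGraph V) (C : Set V) :
    edgeBoundary G Cᶜ = Prod.swap '' edgeBoundary G C := by
  ext ⟨a, b⟩
  constructor
  · rintro ⟨hadj, ha, hb⟩
    refine ⟨(b, a), ⟨hadj.symm, by simpa using hb, by simpa using ha⟩, rfl⟩
  · rintro ⟨⟨x, y⟩, ⟨hadj, hx, hy⟩, heq⟩
    have hxa : y = a := congrArg Prod.fst heq
    have hyb : x = b := congrArg Prod.snd heq
    subst hxa; subst hyb
    exact ⟨hadj.symm, by simpa using hy, by simpa using hx⟩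

lemma weight_compl (G : SimpleGraph V) (C : Set V) : weight G Cᶜ = weight G C := by
  unfold weight
  rw [edgeBoundary_compl]
  exact Set.ncard_image_of_injective _ Prod.swap_injective

lemma edgeBoundary_compl_finite {C : Set V} (h : (edgeBoundary G C).Finite) :
    (edgeBoundary G Cᶜ).Finite := by
  rw [edgeBoundary_compl]; exact h.image _

lemma IsCut.compl {C : Set V} (h : IsCut G C) : IsCut G Cᶜ := by
  obtain ⟨h1, h2, h3, h4, h5⟩ := h
  exact ⟨h2, by simpa using h1, h4, by rw [compl_compl]; exact h3, edgeBoundary_compl_finite h5⟩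

lemma IsCutLe.compl {k : ℕ} {C : Set V} (h : IsCutLe G k C) : IsCutLe G k Cᶜ :=
  ⟨h.1.compl, by rw [weight_compl]; exact h.2⟩

/-- basic nbhd facts -/
lemma subset_nbhd {r : ℕ} {S : Set V} : S ⊆ nbhd G r S := by
  intro v hv
  exact ⟨v, hv, by simp [SimpleGraph.dist_self]⟩

lemma nbhd_mono_set {r : ℕ} {S T : Set V} (h : S ⊆ T) : nbhd G r S ⊆ nbhd G r T := by
  rintro v ⟨u, hu, hd⟩; exact ⟨u, h hu, hd⟩

/-- Balls are finite in connected locally finite graphs. -/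
lemma ball_finite (hlf : LocallyFiniteGraph G) (hc : G.Connected) (w : V) :
    ∀ r : ℕ, {v : V | G.dist v w ≤ r}.Finite := by
  intro r
  induction r with
  | zero =>
    refine Set.Finite.subset (Set.finite_singleton w) ?_
    intro v hv
    simp only [Set.mem_setOf_eq, Nat.le_zero] at hv
    have := ((hc.preconnected v w).dist_eq_zero_iff).1 hv
    simpa using this
  | succ n ih =>
    have hsub : {v : V | G.dist v w ≤ n + 1} ⊆
        {v : V | G.dist v w ≤ n} ∪ ⋃ z ∈ {v : V | G.dist v w ≤ n}, G.neighborSet z := by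
      intro v hv
      simp only [Set.mem_setOf_eq] at hv
      by_cases hvw : G.dist v w ≤ n
      · exact Or.inl hvw
      · have hne : v ≠ w := by rintro rfl; exact hvw (by simp [SimpleGraph.dist_self])
        obtain ⟨p, hp⟩ := (hc.preconnected v w).exists_walk_length_eq_dist
        cases p with
        | nil => exact absurd rfl hne
        | @cons _ z _ hadj q =>
          right
          refine Set.mem_biUnion (show z ∈ {v : V | G.dist v w ≤ n} from ?_) hadj.symm
          simp only [Set.mem_setOf_eq]
          have h1 : G.dist z w ≤ q.length := SimpleGraph.dist_le q
          have h2 : q.length + 1 = G.dist v w := by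
            simpa [SimpleGraph.Walk.length_cons] using hp
          omega
    refine Set.Finite.subset (ih.union (ih.biUnion (fun z _ => hlf z))) hsub

end Toolbox2

section ClaimA
variable {G : SimpleGraph V}

/-- Cut-like sets of weight at most `k` separating `x` from `y`. -/
def cutSep (G : SimpleGraph V) (k : ℕ) (x y : V) : Set (Set V) :=
  {X : Set V | (G.induce X).Connected ∧ (G.induce Xᶜ).Connected ∧
    (edgeBoundary G X).Finite ∧ (edgeBoundary G X).ncard ≤ k ∧ x ∈ X ∧ y ∈ Xᶜ}

lemma exists_crossing_index {X : Set V} :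
    ∀ {x y : V} (p : G.Walk x y) (_ : x ∈ X) (_ : y ∉ X),
      ∃ i, i < p.length ∧ p.getVert i ∈ X ∧ p.getVert (i + 1) ∉ X := by
  intro x y p
  induction p with
  | nil => intro hx hy; exact absurd hx hy
  | @cons a b c hab q ih =>
    intro ha hc
    by_cases hb : b ∈ X
    · obtain ⟨i, hi, h1, h2⟩ := ih hb hc
      refine ⟨i + 1, ?_, ?_, ?_⟩
      · simpa [SimpleGraph.Walk.length_cons] using Nat.succ_lt_succ hi
      · simpa [SimpleGraph.Walk.getVert_cons_succ] using h1
      · simpa [SimpleGraph.Walk.getVert_cons_succ] using h2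
    · refine ⟨0, ?_, ?_, ?_⟩
      · simp [SimpleGraph.Walk.length_cons]
      · simpa [SimpleGraph.Walk.getVert_zero] using ha
      · simpa [SimpleGraph.Walk.getVert_cons_succ, SimpleGraph.Walk.getVert_zero] using hb

/-- A walk within a set avoiding an endpoint of a deleted edge transfers. -/
lemma reachable_deleteEdges_of_walkIn {X : Set V} {u v : V} (hv : v ∉ X) :
    ∀ {a b : V} (p : G.Walk a b) (_ : ∀ w ∈ p.support, w ∈ X),
      (G.deleteEdges {s(u, v)}).Reachable a b := by
  intro a b p
  induction p with
  | nil => intro _; rfl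
  | @cons a c b hac q ih =>
    intro hsup
    have ha : a ∈ X := hsup a (by simp [SimpleGraph.Walk.support_cons])
    have hc : c ∈ X := hsup c (by simp [SimpleGraph.Walk.support_cons])
    have hne : s(a, c) ≠ s(u, v) := by
      intro h
      rw [Sym2.eq_iff] at h
      rcases h with ⟨rfl, rfl⟩ | ⟨rfl, rfl⟩
      · exact hv hc
      · exact hv ha
    have hadj : (G.deleteEdges {s(u, v)}).Adj a c := by
      rw [SimpleGraph.deleteEdges_adj]
      exact ⟨hac, by simpa using hne⟩
    exact hadj.reachable.trans (ih (fun w hw => hsup w (by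
      simp only [SimpleGraph.Walk.support_cons, List.mem_cons]; right; exact hw)))

/-- If the graph minus the edge `uv` still links `u` to `v`, it is connected. -/
lemma deleteEdge_connected_of_reachable {u v : V} (hc : G.Connected)
    (h : (G.deleteEdges {s(u, v)}).Reachable u v) : (G.deleteEdges {s(u, v)}).Connected := by
  rw [SimpleGraph.connected_iff]
  refine ⟨fun a b => ?_, hc.nonempty⟩
  obtain ⟨p⟩ := hc.preconnected a b
  clear hc
  induction p with
  | nil => rfl
  | @cons a c b hac q ih =>
    refine SimpleGraph.Reachable.trans ?_ ih
    by_cases hne : s(a, c) = s(u, v)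
    · rw [Sym2.eq_iff] at hne
      rcases hne with ⟨rfl, rfl⟩ | ⟨rfl, rfl⟩
      · exact h
      · exact h.symm
    · exact SimpleGraph.Adj.reachable (by rw [SimpleGraph.deleteEdges_adj]; exact ⟨hac, by simpa using hne⟩)

theorem cutSep_finite :
    ∀ (k : ℕ) (G : SimpleGraph V), G.Connected → ∀ x y : V, (cutSep G k x y).Finite := by
  intro k
  induction k with
  | zero =>
    intro G hc x y
    convert Set.finite_empty
    rw [Set.eq_empty_iff_forall_notMem]
    rintro X ⟨hX, hXc, hfin, hcard, hx, hy⟩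
    obtain ⟨p⟩ := hc.preconnected x y
    obtain ⟨a, b, h1, h2, h3, -, -⟩ := exists_boundary_of_walk p hx (by simpa using hy)
    have : (a, b) ∈ edgeBoundary G X := ⟨h1, h2, h3⟩
    have hemp : edgeBoundary G X = ∅ := by
      rw [← Set.ncard_eq_zero hfin] at *
      omega
    rw [hemp] at this
    exact this
  | succ k ih =>
    intro G hc x y
    obtain ⟨P⟩ := hc.preconnected x y
    have hcover : cutSep G (k + 1) x y ⊆
        ⋃ i ∈ Finset.range P.length,
          {X | X ∈ cutSep G (k + 1) x y ∧ P.getVert i ∈ X ∧ P.getVert (i + 1) ∉ X} := by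
      intro X hX
      obtain ⟨i, hi, h1, h2⟩ := exists_crossing_index P hX.2.2.2.2.1 (by simpa using hX.2.2.2.2.2)
      exact Set.mem_biUnion (Finset.mem_range.2 hi) ⟨hX, h1, h2⟩
    refine Set.Finite.subset (Set.Finite.biUnion (Finset.range P.length).finite_toSet
      (fun i hi => ?_)) hcover
    have hilen : i < P.length := by simpa using hi
    set u := P.getVert i with hu
    set v := P.getVert (i + 1) with hv
    · have hadj : G.Adj u v := P.adj_getVert_succ hilen
      set G' := G.deleteEdges {s(u, v)} with hG'
      by_cases hconn' : G'.Connected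
      · refine Set.Finite.subset (ih G' hconn' u v) ?_
        rintro X ⟨⟨hX, hXc, hfin, hcard, -, -⟩, huX, hvX⟩
        have hXadj : ∀ a b : V, a ∈ X → b ∈ X → (G.Adj a b ↔ G'.Adj a b) := by
          intro a b ha hb
          rw [hG', SimpleGraph.deleteEdges_adj]
          constructor
          · intro h
            refine ⟨h, ?_⟩
            simp only [Set.mem_singleton_iff, Sym2.eq_iff]
            rintro (⟨rfl, rfl⟩ | ⟨rfl, rfl⟩)
            · exact hvX hb
            · exact hvX ha
          · exact fun h => h.1
        have hXcadj : ∀ a b : V, a ∈ Xᶜ → b ∈ Xᶜ → (G.Adj a b ↔ G'.Adj a b) := by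
          intro a b ha hb
          rw [hG', SimpleGraph.deleteEdges_adj]
          constructor
          · intro h
            refine ⟨h, ?_⟩
            simp only [Set.mem_singleton_iff, Sym2.eq_iff]
            rintro (⟨rfl, rfl⟩ | ⟨rfl, rfl⟩)
            · exact ha huX
            · exact hb huX
          · exact fun h => h.1
        have hind : G'.induce X = G.induce X := by
          ext ⟨a, ha⟩ ⟨b, hb⟩
          exact (hXadj a b ha hb).symm
        have hindc : G'.induce Xᶜ = G.induce Xᶜ := by
          ext ⟨a, ha⟩ ⟨b, hb⟩
          exact (hXcadj a b ha hb).symm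
        have hbd : edgeBoundary G' X = edgeBoundary G X \ {(u, v)} := by
          ext ⟨a, b⟩
          simp only [edgeBoundary, Set.mem_setOf_eq, Set.mem_diff, Set.mem_singleton_iff, hG',
            SimpleGraph.deleteEdges_adj, Set.mem_singleton_iff]
          constructor
          · rintro ⟨⟨h1, h2⟩, h3, h4⟩
            refine ⟨⟨h1, h3, h4⟩, ?_⟩
            rintro heq
            have : (a, b).1 = u ∧ (a, b).2 = v := ⟨congrArg Prod.fst heq, congrArg Prod.snd heq⟩
            apply h2
            show s(a, b) ∈ ({s(u, v)} : Set (Sym2 V))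
            have ha' : a = u := this.1
            have hb' : b = v := this.2
            rw [ha', hb']
            exact Set.mem_singleton _
          · rintro ⟨⟨h1, h3, h4⟩, h5⟩
            refine ⟨⟨h1, ?_⟩, h3, h4⟩
            intro hmem
            have hmem' : s(a, b) = s(u, v) := hmem
            rw [Sym2.eq_iff] at hmem'
            rename' hmem' => hmem
            rcases hmem with ⟨rfl, rfl⟩ | ⟨rfl, rfl⟩
            · exact h5 rfl
            · exact h4 huX
        have hmemb : (u, v) ∈ edgeBoundary G X := ⟨hadj, huX, hvX⟩
        refine ⟨by rw [hind]; exact hX, by rw [hindc]; exact hXc, ?_, ?_, huX, hvX⟩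
        · rw [hbd]; exact hfin.diff
        · rw [hbd, Set.ncard_diff_singleton_of_mem hmemb]
          omega
      · -- u–v is a bridge
        refine Set.Finite.subset (Set.finite_singleton {z | G'.Reachable u z}) ?_
        rintro X ⟨⟨hX, hXc, hfin, hcard, -, -⟩, huX, hvX⟩
        simp only [Set.mem_singleton_iff]
        have hXsub : X ⊆ {z | G'.Reachable u z} := by
          intro z hz
          obtain ⟨-, hwalk⟩ := induce_connected_iff_walkIn.1 hX
          obtain ⟨p, hp⟩ := hwalk u huX z hz
          exact reachable_deleteEdges_of_walkIn hvX p hp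
        have hXcsub : Xᶜ ⊆ {z | G'.Reachable v z} := by
          intro z hz
          obtain ⟨-, hwalk⟩ := induce_connected_iff_walkIn.1 hXc
          obtain ⟨p, hp⟩ := hwalk v hvX z hz
          have : (G.deleteEdges {s(v, u)}).Reachable v z :=
            reachable_deleteEdges_of_walkIn (by simpa using huX) p hp
          rw [hG']
          rw [Sym2.eq_swap (a := u) (b := v)]
          exact this
        have hdisj : ∀ z, G'.Reachable u z → G'.Reachable v z → False := by
          intro z h1 h2
          exact hconn' (deleteEdge_connected_of_reachable hc (h1.trans h2.symm))
        apply Set.eq_of_subset_of_subset hXsub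
        intro z hz
        by_contra hzX
        exact hdisj z hz (hXcsub hzX)

end ClaimA

section ClaimB
variable {G : SimpleGraph V}

/-- Finitely many `k`-cuts are not nested with a given cut. -/
theorem notNested_finite (hc : G.Connected) {C : Set V} (hC : IsCut G C) (k : ℕ) :
    {X : Set V | IsCutLe G k X ∧ ¬ Nested C X}.Finite := by
  have hcover : {X : Set V | IsCutLe G k X ∧ ¬ Nested C X} ⊆
      ⋃ p ∈ edgeBoundary G C, ⋃ q ∈ edgeBoundary G C, cutSep G k p.1 q.1 := by
    rintro X ⟨⟨⟨hXne, hXcne, hXconn, hXcconn, hXfin⟩, hXw⟩, hnn⟩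
    obtain ⟨h1, h2, h3, h4⟩ := not_nested_corners hnn
    -- corners of (C, X); we need boundary edges of C inside X and inside Xᶜ
    obtain ⟨x1, hx1⟩ := h1  -- C ∩ X
    obtain ⟨x2, hx2⟩ := h3  -- Cᶜ ∩ X
    obtain ⟨y1, hy1⟩ := h2  -- C ∩ Xᶜ
    obtain ⟨y2, hy2⟩ := h4  -- Cᶜ ∩ Xᶜ
    obtain ⟨a, b, hab, haC, hbC, haX, hbX⟩ :=
      exists_boundary_in_set hXconn hx1.2 hx2.2 hx1.1 (by simpa using hx2.1)
    obtain ⟨c, d, hcd, hcC, hdC, hcX, hdX⟩ :=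
      exists_boundary_in_set hXcconn hy1.2 hy2.2 hy1.1 (by simpa using hy2.1)
    have hpa : (a, b) ∈ edgeBoundary G C := ⟨hab, haC, hbC⟩
    have hpc : (c, d) ∈ edgeBoundary G C := ⟨hcd, hcC, hdC⟩
    refine Set.mem_biUnion hpa (Set.mem_biUnion hpc ?_)
    exact ⟨hXconn, hXcconn, hXfin, hXw, haX, hcX⟩
  refine Set.Finite.subset (hC.2.2.2.2.biUnion (fun p _ =>
    hC.2.2.2.2.biUnion (fun q _ => cutSep_finite k G hc p.1 q.1))) hcover

end ClaimB

section Components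
variable {G : SimpleGraph V}

/-- The connected component of `t` inside the vertex set `T`, as the set of vertices
joined to `t` by a walk inside `T`. -/
def compOf (G : SimpleGraph V) (T : Set V) (t : V) : Set V := {z | WalkIn G T z t}

lemma compOf_subset {T : Set V} {t : V} : compOf G T t ⊆ T := fun _ hz => hz.mem_left

lemma mem_compOf_self {T : Set V} {t : V} (ht : t ∈ T) : t ∈ compOf G T t := walkIn_refl ht

lemma walkIn_suffix {T : Set V} :
    ∀ {x y : V} (p : G.Walk x y) (_ : ∀ w ∈ p.support, w ∈ T),
      ∀ w ∈ p.support, WalkIn G T w y := by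
  intro x y p
  induction p with
  | nil =>
    intro hsup w hw
    simp only [SimpleGraph.Walk.support_nil, List.mem_singleton] at hw
    subst hw
    exact walkIn_refl (hsup _ (by simp))
  | @cons a b c hab q ih =>
    intro hsup w hw
    have hq : ∀ w ∈ q.support, w ∈ T := fun w hw =>
      hsup w (by simp only [SimpleGraph.Walk.support_cons, List.mem_cons]; right; exact hw)
    rw [SimpleGraph.Walk.support_cons, List.mem_cons] at hw
    rcases hw with rfl | hw
    · exact ⟨SimpleGraph.Walk.cons hab q, hsup⟩
    · exact ih hq w hw

lemma mem_compOf_of_walkIn {T : Set V} {t z : V} (h : WalkIn G T z t) : z ∈ compOf G T t := h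

/-- The component is closed under adjacency within `T`. -/
lemma compOf_closed {T : Set V} {t : V} {a b : V} (ha : a ∈ compOf G T t) (hb : b ∈ T)
    (hadj : G.Adj a b) : b ∈ compOf G T t :=
  (walkIn_of_adj hadj.symm hb ha.mem_left).trans ha

/-- Edges leaving the component leave `T`. -/
lemma compOf_boundary {T : Set V} {t : V} {a b : V} (ha : a ∈ compOf G T t)
    (hb : b ∉ compOf G T t) (hadj : G.Adj a b) : b ∉ T :=
  fun hbT => hb (compOf_closed ha hbT hadj)

lemma edgeBoundary_compOf_subset {T : Set V} {t : V} :
    edgeBoundary G (compOf G T t) ⊆ edgeBoundary G T := by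
  rintro ⟨a, b⟩ ⟨hadj, ha, hb⟩
  exact ⟨hadj, compOf_subset ha, compOf_boundary ha hb hadj⟩

/-- The component is connected. -/
lemma compOf_connected {T : Set V} {t : V} (ht : t ∈ T) :
    (G.induce (compOf G T t)).Connected := by
  rw [induce_connected_iff_walkIn]
  refine ⟨⟨t, mem_compOf_self ht⟩, fun x hx y hy => ?_⟩
  obtain ⟨p, hp⟩ := hx
  have hsup : ∀ w ∈ p.support, w ∈ compOf G T t := fun w hw =>
    walkIn_suffix p hp w hw
  exact WalkIn.trans ⟨p, hsup⟩ ((show WalkIn G (compOf G T t) y t from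
    by obtain ⟨q, hq⟩ := hy; exact ⟨q, fun w hw => walkIn_suffix q hq w hw⟩).symm)

/-- A connected subset of `T` meeting the component lies in the component. -/
lemma subset_compOf_of_connected {T S : Set V} {t : V} (hS : (G.induce S).Connected)
    (hST : S ⊆ T) {s : V} (hs : s ∈ S) (hsK : s ∈ compOf G T t) : S ⊆ compOf G T t := by
  intro z hz
  obtain ⟨-, hwalk⟩ := induce_connected_iff_walkIn.1 hS
  exact ((hwalk z hz s hs).mono hST).trans hsK

/-- Two components are equal or disjoint. -/
lemma compOf_eq_of_mem {T : Set V} {t z : V} (hz : z ∈ compOf G T t) :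
    compOf G T z = compOf G T t := by
  ext w
  constructor
  · intro hw; exact hw.trans hz
  · intro hw; exact hw.trans hz.symm

/-- Union of two intersecting connected sets is connected. -/
lemma induce_union_connected {S₁ S₂ : Set V} (h1 : (G.induce S₁).Connected)
    (h2 : (G.induce S₂).Connected) (hint : (S₁ ∩ S₂).Nonempty) :
    (G.induce (S₁ ∪ S₂)).Connected := by
  rw [induce_connected_iff_walkIn] at h1 h2 ⊢
  obtain ⟨z, hz1, hz2⟩ := hint
  refine ⟨⟨z, Or.inl hz1⟩, fun x hx y hy => ?_⟩
  have key : ∀ w ∈ S₁ ∪ S₂, WalkIn G (S₁ ∪ S₂) w z := by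
    intro w hw
    rcases hw with hw | hw
    · exact (h1.2 w hw z hz1).mono Set.subset_union_left
    · exact (h2.2 w hw z hz2).mono Set.subset_union_right
  exact (key x hx).trans (key y hy).symm

/-- The complement of a component of `T` is connected provided `Tᶜ` is. -/
lemma compOf_compl_connected (hc : G.Connected) {T : Set V} {t : V} (ht : t ∈ T)
    (hTc : (G.induce Tᶜ).Connected) :
    (G.induce (compOf G T t)ᶜ).Connected := by
  obtain ⟨⟨y₀, hy₀⟩, hTcwalk⟩ := induce_connected_iff_walkIn.1 hTc
  have hTsub : Tᶜ ⊆ (compOf G T t)ᶜ := fun z hz hzK => hz (compOf_subset hzK)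
  rw [induce_connected_iff_walkIn]
  have key : ∀ z ∈ (compOf G T t)ᶜ, ∃ w ∈ Tᶜ, WalkIn G (compOf G T t)ᶜ z w := by
    intro z hz
    by_cases hzT : z ∈ T
    · -- z is in another component of T
      have hzcomp : z ∈ compOf G T z := mem_compOf_self hzT
      have hdisj : compOf G T z ∩ compOf G T t = ∅ := by
        rw [Set.eq_empty_iff_forall_notMem]
        rintro w ⟨hw1, hw2⟩
        have e1 := compOf_eq_of_mem hw1
        have e2 := compOf_eq_of_mem hw2
        exact hz (by rw [← e2, e1]; exact hzcomp)
      obtain ⟨p⟩ := hc.preconnected z y₀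
      obtain ⟨a, b, hab, haK, hbK, hap, hbp⟩ :=
        exists_boundary_of_walk p hzcomp (fun hy => hy₀ (compOf_subset hy))
      have hbT : b ∉ T := compOf_boundary haK hbK hab
      have hsub : compOf G T z ⊆ (compOf G T t)ᶜ := by
        intro w hw hwt
        have : w ∈ compOf G T z ∩ compOf G T t := ⟨hw, hwt⟩
        rw [hdisj] at this
        exact this
      obtain ⟨-, hwalkz⟩ := induce_connected_iff_walkIn.1 (compOf_connected hzT)
      refine ⟨b, hbT, ?_⟩
      have h1 : WalkIn G (compOf G T t)ᶜ z a := (hwalkz z hzcomp a haK).mono hsub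
      exact h1.trans (walkIn_of_adj hab (hsub haK) (hTsub hbT))
    · exact ⟨z, hzT, walkIn_refl (hTsub hzT)⟩
  refine ⟨⟨y₀, hTsub hy₀⟩, fun x hx y hy => ?_⟩
  obtain ⟨wx, hwx, hwalkx⟩ := key x hx
  obtain ⟨wy, hwy, hwalky⟩ := key y hy
  exact hwalkx.trans (((hTcwalk wx hwx wy hwy).mono hTsub).trans hwalky.symm)

end Components

section Tails
variable {G : SimpleGraph V}

lemma walkIn_chainZ {T : Set V} (f : ℤ → V) (hadj : ∀ i : ℤ, G.Adj (f i) (f (i + 1)))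
    {m n : ℤ} (hmn : m ≤ n) (hmem : ∀ i : ℤ, m ≤ i → i ≤ n → f i ∈ T) :
    WalkIn G T (f m) (f n) := by
  refine Int.le_induction
    (motive := fun n _ => (∀ i : ℤ, m ≤ i → i ≤ n → f i ∈ T) → WalkIn G T (f m) (f n))
    (fun h => walkIn_refl (h m le_rfl le_rfl)) (fun n hn ih h => ?_) n hmn hmem
  refine (ih (fun i h1 h2 => h i h1 (by omega))).trans
    (walkIn_of_adj (hadj n) (h n hn (by omega)) (h (n + 1) (by omega) le_rfl))

/-- crossing indices of a path over the boundary of `T` are finite -/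
lemma crossings_finite {α : ℤ → V} (hα : IsBiInfinitePath G α) {T : Set V}
    (hbd : (edgeBoundary G T).Finite) :
    {i : ℤ | (α i ∈ T ∧ α (i + 1) ∉ T) ∨ (α i ∉ T ∧ α (i + 1) ∈ T)}.Finite := by
  classical
  set S := {i : ℤ | (α i ∈ T ∧ α (i + 1) ∉ T) ∨ (α i ∉ T ∧ α (i + 1) ∈ T)} with hS
  set F : ℤ → V × V := fun i => if α i ∈ T then (α i, α (i + 1)) else (α (i + 1), α i) with hF
  have himg : F '' S ⊆ edgeBoundary G T := by
    rintro ⟨a, b⟩ ⟨i, hi, heq⟩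
    rw [← heq]
    rcases hi with ⟨h1, h2⟩ | ⟨h1, h2⟩
    · rw [hF]; simp only [if_pos h1]
      exact ⟨hα.2 i, h1, h2⟩
    · rw [hF]; simp only [if_neg h1]
      exact ⟨(hα.2 i).symm, h2, h1⟩
  have hinj : Set.InjOn F S := by
    intro i hi j hj hij
    by_cases h1 : α i ∈ T <;> by_cases h2 : α j ∈ T
    · rw [hF] at hij; simp only [if_pos h1, if_pos h2] at hij
      exact hα.1 (congrArg Prod.fst hij)
    · rw [hF] at hij; simp only [if_pos h1, if_neg h2] at hij
      have e1 : α i = α (j + 1) := congrArg Prod.fst hij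
      have e2 : α (i + 1) = α j := congrArg Prod.snd hij
      have := hα.1 e1
      have := hα.1 e2
      omega
    · rw [hF] at hij; simp only [if_neg h1, if_pos h2] at hij
      have e1 : α (i + 1) = α j := congrArg Prod.fst hij
      have e2 : α i = α (j + 1) := congrArg Prod.snd hij
      have := hα.1 e1
      have := hα.1 e2
      omega
    · rw [hF] at hij; simp only [if_neg h1, if_neg h2] at hij
      exact hα.1 (congrArg Prod.snd hij)
  exact Set.Finite.of_finite_image (hbd.subset himg) hinj

/-- A bi-infinite path with infinitely many vertices in a finite-boundary set `T`
eventually stays in a single component of `T`. -/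
lemma exists_tail_component {α : ℤ → V} (hα : IsBiInfinitePath G α) {T : Set V}
    (hbd : (edgeBoundary G T).Finite) (hT : (Set.range α ∩ T).Infinite) :
    ∃ t ∈ T, (Set.range α ∩ compOf G T t).Infinite := by
  classical
  have hcr := crossings_finite hα hbd
  obtain ⟨a, ha⟩ := hcr.bddAbove
  obtain ⟨b, hb⟩ := hcr.bddBelow
  set Mp : ℤ := a + 1 with hMp
  set Mm : ℤ := b - 1 with hMm
  have hncp : ∀ i : ℤ, Mp ≤ i →
      ¬((α i ∈ T ∧ α (i + 1) ∉ T) ∨ (α i ∉ T ∧ α (i + 1) ∈ T)) := by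
    intro i hi hmem
    have := ha hmem
    omega
  have hncm : ∀ i : ℤ, i ≤ Mm →
      ¬((α i ∈ T ∧ α (i + 1) ∉ T) ∨ (α i ∉ T ∧ α (i + 1) ∈ T)) := by
    intro i hi hmem
    have := hb hmem
    omega
  have hconstp : ∀ i : ℤ, Mp ≤ i → (α i ∈ T ↔ α Mp ∈ T) := by
    intro i hi
    refine Int.le_induction (motive := fun j _ => α j ∈ T ↔ α Mp ∈ T) Iff.rfl
      (fun n hn ih => ?_) i hi
    have := hncp n hn
    tauto
  have hconstm : ∀ i : ℤ, i ≤ Mm → (α i ∈ T ↔ α Mm ∈ T) := by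
    intro i hi
    have h' : ∀ j : ℕ, α (Mm - j) ∈ T ↔ α Mm ∈ T := by
      intro j
      induction j with
      | zero => simp
      | succ n ih =>
        have hcross := hncm (Mm - (n + 1)) (by omega)
        have hstep : Mm - (n + 1) + 1 = Mm - n := by ring
        rw [hstep] at hcross
        tauto
    have : ∃ j : ℕ, i = Mm - j := ⟨(Mm - i).toNat, by omega⟩
    obtain ⟨j, rfl⟩ := this
    exact h' j
  have hidx : {i : ℤ | α i ∈ T}.Infinite := by
    intro hfin
    apply hT
    have : Set.range α ∩ T ⊆ α '' {i : ℤ | α i ∈ T} := by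
      rintro v ⟨⟨i, rfl⟩, hv⟩
      exact ⟨i, hv, rfl⟩
    exact Set.Finite.subset (hfin.image α) this
  have hout : ∃ i ∈ {i : ℤ | α i ∈ T}, i ∉ Set.Icc Mm Mp := by
    by_contra h
    push_neg at h
    exact hidx (Set.Finite.subset (Set.finite_Icc Mm Mp) h)
  obtain ⟨i, hiT, hiout⟩ := hout
  simp only [Set.mem_Icc, not_and_or, not_le] at hiout
  rcases hiout with hiout | hiout
  · -- downward tail
    have hMT : α Mm ∈ T := (hconstm i (by omega)).1 hiT
    refine ⟨α Mm, hMT, ?_⟩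
    have hsub : α '' Set.Iic Mm ⊆ Set.range α ∩ compOf G T (α Mm) := by
      rintro v ⟨j, hj, rfl⟩
      refine ⟨Set.mem_range_self j, ?_⟩
      exact walkIn_chainZ α hα.2 hj (fun l h1 h2 => (hconstm l (by omega)).2 hMT)
    exact Set.Infinite.mono hsub ((Set.Iic_infinite Mm).image (hα.1.injOn))
  · -- upward tail
    have hMT : α Mp ∈ T := (hconstp i (by omega)).1 hiT
    refine ⟨α Mp, hMT, ?_⟩
    have hsub : α '' Set.Ici Mp ⊆ Set.range α ∩ compOf G T (α Mp) := by
      rintro v ⟨j, hj, rfl⟩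
      refine ⟨Set.mem_range_self j, ?_⟩
      exact (walkIn_chainZ α hα.2 hj (fun l h1 h2 => (hconstp l (by omega)).2 hMT)).symm
    exact Set.Infinite.mono hsub ((Set.Ici_infinite Mp).image (hα.1.injOn))

end Tails

section Corners
variable {G : SimpleGraph V}

lemma edgeBoundary_inter_subset {A B : Set V} :
    edgeBoundary G (A ∩ B) ⊆ edgeBoundary G A ∪ edgeBoundary G B := by
  rintro ⟨a, b⟩ ⟨hadj, ⟨haA, haB⟩, hb⟩
  by_cases hbA : b ∈ A
  · right
    refine ⟨hadj, haB, fun hbB => hb ⟨hbA, hbB⟩⟩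
  · left
    exact ⟨hadj, haA, hbA⟩

lemma edgeBoundary_union_subset {A B : Set V} :
    edgeBoundary G (A ∪ B) ⊆ edgeBoundary G A ∪ edgeBoundary G B := by
  rintro ⟨a, b⟩ ⟨hadj, ha, hb⟩
  rcases ha with ha | ha
  · exact Or.inl ⟨hadj, ha, fun h => hb (Or.inl h)⟩
  · exact Or.inr ⟨hadj, ha, fun h => hb (Or.inr h)⟩

lemma edgeBoundary_inter_union_subset {A B : Set V} :
    edgeBoundary G (A ∩ B) ∩ edgeBoundary G (A ∪ B) ⊆
      edgeBoundary G A ∩ edgeBoundary G B := by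
  rintro ⟨a, b⟩ ⟨⟨hadj, ⟨haA, haB⟩, -⟩, ⟨-, -, hb⟩⟩
  exact ⟨⟨hadj, haA, fun h => hb (Or.inl h)⟩, ⟨hadj, haB, fun h => hb (Or.inr h)⟩⟩

lemma weight_submodular {A B : Set V} (hA : (edgeBoundary G A).Finite)
    (hB : (edgeBoundary G B).Finite) :
    weight G (A ∩ B) + weight G (A ∪ B) ≤ weight G A + weight G B := by
  have hAB : (edgeBoundary G A ∪ edgeBoundary G B).Finite := hA.union hB
  have h1 : (edgeBoundary G (A ∩ B)).Finite := hAB.subset edgeBoundary_inter_subset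
  have h2 : (edgeBoundary G (A ∪ B)).Finite := hAB.subset edgeBoundary_union_subset
  have e1 : weight G (A ∩ B) + weight G (A ∪ B) =
      (edgeBoundary G (A ∩ B) ∪ edgeBoundary G (A ∪ B)).ncard +
      (edgeBoundary G (A ∩ B) ∩ edgeBoundary G (A ∪ B)).ncard :=
    (Set.ncard_union_add_ncard_inter _ _ h1 h2).symm
  have e2 : weight G A + weight G B =
      (edgeBoundary G A ∪ edgeBoundary G B).ncard +
      (edgeBoundary G A ∩ edgeBoundary G B).ncard :=
    (Set.ncard_union_add_ncard_inter _ _ hA hB).symm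
  have le1 : (edgeBoundary G (A ∩ B) ∪ edgeBoundary G (A ∪ B)).ncard ≤
      (edgeBoundary G A ∪ edgeBoundary G B).ncard :=
    Set.ncard_le_ncard (Set.union_subset edgeBoundary_inter_subset edgeBoundary_union_subset) hAB
  have le2 : (edgeBoundary G (A ∩ B) ∩ edgeBoundary G (A ∪ B)).ncard ≤
      (edgeBoundary G A ∩ edgeBoundary G B).ncard :=
    Set.ncard_le_ncard edgeBoundary_inter_union_subset (hA.subset Set.inter_subset_left)
  simp only [weight] at e1 e2 ⊢
  omega

lemma weight_corner_compl {A B : Set V} :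
    weight G (Aᶜ ∩ Bᶜ) = weight G (A ∪ B) := by
  rw [← Set.compl_union, weight_compl]

/-- A component of a corner of two crossing cuts is a cut. -/
lemma corner_cut (hc : G.Connected) {A B : Set V} (hA : IsCut G A) (hB : IsCut G B)
    (hcc : (Aᶜ ∩ Bᶜ).Nonempty) {t : V} (ht : t ∈ A ∩ B) :
    IsCut G (compOf G (A ∩ B) t) := by
  have hTc : (G.induce (A ∩ B)ᶜ).Connected := by
    rw [Set.compl_inter]
    exact induce_union_connected hA.2.2.2.1 hB.2.2.2.1 hcc
  refine ⟨⟨t, mem_compOf_self ht⟩, ?_, compOf_connected ht, compOf_compl_connected hc ht hTc, ?_⟩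
  · obtain ⟨z, hz⟩ := hcc
    exact ⟨z, fun hzK => hz.1 (compOf_subset hzK).1⟩
  · exact ((hA.2.2.2.2.union hB.2.2.2.2).subset edgeBoundary_inter_subset).subset
      edgeBoundary_compOf_subset

lemma weight_compOf_le {A B : Set V} (hA : (edgeBoundary G A).Finite)
    (hB : (edgeBoundary G B).Finite) {t : V} :
    weight G (compOf G (A ∩ B) t) ≤ weight G (A ∩ B) :=
  Set.ncard_le_ncard edgeBoundary_compOf_subset
    ((hA.union hB).subset edgeBoundary_inter_subset)

/-- S2-type lemma. -/
lemma nested_of_subsets {K K' A X : Set V} (hK : K ⊆ A) (hK' : K' ⊆ Aᶜ)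
    (h : Nested A X) : Nested K X ∨ Nested K' X := by
  rcases h with h | h | h | h
  · exact Or.inl (Or.inl (hK.trans h))
  · exact Or.inl (Or.inr (Or.inl (hK.trans h)))
  · exact Or.inr (Or.inl (hK'.trans h))
  · exact Or.inr (Or.inr (Or.inl (hK'.trans h)))

/-- S1: a cut nested with both crossing cuts is nested with both opposite corner
components. -/
lemma nested_corner_main (hnn : ¬ Nested A B)
    {tK tK' : V} (htK : tK ∈ A ∩ B) (htK' : tK' ∈ Aᶜ ∩ Bᶜ)
    {X : Set V} (hX : IsCut G X) (hXA : Nested A X) (hXB : Nested B X) :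
    Nested (compOf G (A ∩ B) tK) X ∧ Nested (compOf G (Aᶜ ∩ Bᶜ) tK') X := by
  obtain ⟨hTL, hTR, hBL, hBR⟩ := not_nested_corners hnn
  set K := compOf G (A ∩ B) tK with hKdef
  set K' := compOf G (Aᶜ ∩ Bᶜ) tK' with hK'def
  have hKsub : K ⊆ A ∩ B := compOf_subset
  have hK'sub : K' ⊆ Aᶜ ∩ Bᶜ := compOf_subset
  have hXconn := hX.2.2.1
  have hXcconn := hX.2.2.2.1
  -- dichotomies
  have dichK : ∀ S : Set V, (G.induce S).Connected → S ⊆ A ∩ B → S ⊆ K ∨ S ∩ K = ∅ := by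
    intro S hS hST
    by_cases hint : (S ∩ K).Nonempty
    · obtain ⟨s, hs1, hs2⟩ := hint
      exact Or.inl (subset_compOf_of_connected hS hST hs1 hs2)
    · exact Or.inr (Set.not_nonempty_iff_eq_empty.1 hint)
  have dichK' : ∀ S : Set V, (G.induce S).Connected → S ⊆ Aᶜ ∩ Bᶜ → S ⊆ K' ∨ S ∩ K' = ∅ := by
    intro S hS hST
    by_cases hint : (S ∩ K').Nonempty
    · obtain ⟨s, hs1, hs2⟩ := hint
      exact Or.inl (subset_compOf_of_connected hS hST hs1 hs2)
    · exact Or.inr (Set.not_nonempty_iff_eq_empty.1 hint)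
  have disj_of_subset : ∀ {S T : Set V}, S ∩ T = ∅ → S ⊆ Tᶜ := by
    intro S T h z hz hzT
    have : z ∈ S ∩ T := ⟨hz, hzT⟩
    rw [h] at this
    exact this
  -- abbreviations for empty-corner contradictions
  have habs : ∀ {P Q : Set V}, (P ∩ Q).Nonempty → P ⊆ Qᶜ → False := by
    rintro P Q ⟨z, hz1, hz2⟩ hPQ
    exact hPQ hz1 hz2
  rcases hXA with h1 | h1 | h1 | h1 <;> rcases hXB with h2 | h2 | h2 | h2
  · -- A ⊆ X, B ⊆ X : Xᶜ ⊆ Aᶜ ∩ Bᶜ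
    have hXc : Xᶜ ⊆ Aᶜ ∩ Bᶜ := fun z hz =>
      ⟨fun hA' => hz (h1 hA'), fun hB' => hz (h2 hB')⟩
    refine ⟨Or.inl ((hKsub.trans Set.inter_subset_left).trans h1), ?_⟩
    rcases dichK' Xᶜ hXcconn hXc with h | h
    · exact Or.inr (Or.inr (Or.inl (by
        intro z hz
        by_contra hzX
        exact hz (h hzX))))
    · -- Xᶜ ∩ K' = ∅, so K' ⊆ X
      exact Or.inl (fun z hz => by
        by_contra hzX
        have hmem : z ∈ Xᶜ ∩ K' := ⟨hzX, hz⟩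
        rw [h] at hmem
        exact hmem)
  · -- A ⊆ X, B ⊆ Xᶜ : contradiction with A ∩ B nonempty
    obtain ⟨z, hz1, hz2⟩ := hTL
    exact absurd (h1 hz1) (h2 hz2)
  · -- A ⊆ X, Bᶜ ⊆ X : K ⊆ A ⊆ X and K' ⊆ Bᶜ ⊆ X
    exact ⟨Or.inl ((hKsub.trans Set.inter_subset_left).trans h1),
      Or.inl ((hK'sub.trans Set.inter_subset_right).trans h2)⟩
  · -- A ⊆ X, Bᶜ ⊆ Xᶜ (X ⊆ B) : A ⊆ X ⊆ B ⟹ A ∩ Bᶜ = ∅ contra hTR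
    obtain ⟨z, hz1, hz2⟩ := hTR
    have hXB' : X ⊆ B := by
      intro z hz
      by_contra hzB
      exact (h2 hzB) hz
    exact absurd (hXB' (h1 hz1)) hz2
  · -- A ⊆ Xᶜ, B ⊆ X : B ⊆ X ⊆ Aᶜ ⟹ A ∩ B = ∅ contra hTL
    obtain ⟨z, hz1, hz2⟩ := hTL
    exact absurd (h1 hz1) (fun h => h (h2 hz2))
  · -- A ⊆ Xᶜ, B ⊆ Xᶜ : X ⊆ Aᶜ ∩ Bᶜ
    have hXsub : X ⊆ Aᶜ ∩ Bᶜ := fun z hz =>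
      ⟨fun hA' => h1 hA' hz, fun hB' => h2 hB' hz⟩
    have hKX : K ⊆ Xᶜ := fun z hz hzX =>
      (hXsub hzX).1 (hKsub hz).1
    refine ⟨Or.inr (Or.inl hKX), ?_⟩
    rcases dichK' X hXconn hXsub with h | h
    · exact Or.inr (Or.inr (Or.inr (fun z hz hzX => hz (h hzX))))
    · exact Or.inr (Or.inl (disj_of_subset (by rw [Set.inter_comm]; exact h)))
  · -- A ⊆ Xᶜ, Bᶜ ⊆ X : A ⊆ Xᶜ ⊆ B ⟹ A ∩ Bᶜ = ∅ contra hTR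
    obtain ⟨z, hz1, hz2⟩ := hTR
    have : Xᶜ ⊆ B := by
      intro w hw
      by_contra hwB
      exact hw (h2 hwB)
    exact absurd (this (h1 hz1)) hz2
  · -- A ⊆ Xᶜ, Bᶜ ⊆ Xᶜ : X ⊆ Aᶜ ∩ B
    have hKX : K ⊆ Xᶜ := fun z hz hzX => h1 (hKsub hz).1 hzX
    have hK'X : K' ⊆ Xᶜ := fun z hz hzX => h2 (hK'sub hz).2 hzX
    exact ⟨Or.inr (Or.inl hKX), Or.inr (Or.inl hK'X)⟩
  · -- Aᶜ ⊆ X, B ⊆ X : K' ⊆ Aᶜ ⊆ X; Xᶜ ⊆ A ∩ Bᶜ so K ∩ Xᶜ ⊆ (A∩B) ∩ (A∩Bᶜ) = ∅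
    have hXc : Xᶜ ⊆ A ∩ Bᶜ := by
      intro z hz
      constructor
      · by_contra hzA
        exact hz (h1 hzA)
      · intro hB'
        exact hz (h2 hB')
    have hKX : K ⊆ X := by
      intro z hz
      by_contra hzX
      exact (hXc hzX).2 (hKsub hz).2
    exact ⟨Or.inl hKX, Or.inl ((hK'sub.trans Set.inter_subset_left).trans h1)⟩
  · -- Aᶜ ⊆ X, B ⊆ Xᶜ : B ⊆ Xᶜ ⊆ A ⟹ Aᶜ ∩ B = ∅ contra hBL
    obtain ⟨z, hz1, hz2⟩ := hBL
    have : Xᶜ ⊆ A := by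
      intro w hw
      by_contra hwA
      exact hw (h1 hwA)
    exact absurd (this (h2 hz2)) hz1
  · -- Aᶜ ⊆ X, Bᶜ ⊆ X : Xᶜ ⊆ A ∩ B
    have hXc : Xᶜ ⊆ A ∩ B := by
      intro z hz
      constructor
      · by_contra hzA
        exact hz (h1 hzA)
      · by_contra hzB
        exact hz (h2 hzB)
    have hK'X : K' ⊆ X := (hK'sub.trans Set.inter_subset_left).trans h1
    refine ⟨?_, Or.inl hK'X⟩
    rcases dichK Xᶜ hXcconn hXc with h | h
    · exact Or.inr (Or.inr (Or.inl (fun z hz => by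
        by_contra hzX
        exact hz (h hzX))))
    · exact Or.inl (fun z hz => by
        by_contra hzX
        have hmem : z ∈ Xᶜ ∩ K := ⟨hzX, hz⟩
        rw [h] at hmem
        exact hmem)
  · -- Aᶜ ⊆ X, Bᶜ ⊆ Xᶜ : Aᶜ ⊆ X ⊆ B ⟹ Aᶜ ∩ Bᶜ = ∅ contra hBR
    obtain ⟨z, hz1, hz2⟩ := hBR
    have hXB' : X ⊆ B := by
      intro w hw
      by_contra hwB
      exact h2 hwB hw
    exact absurd (hXB' (h1 hz1)) hz2
  · -- Aᶜ ⊆ Xᶜ, B ⊆ X : B ⊆ X ⊆ A ⟹ Aᶜ ∩ B = ∅ contra hBL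
    obtain ⟨z, hz1, hz2⟩ := hBL
    have hXA' : X ⊆ A := by
      intro w hw
      by_contra hwA
      exact h1 hwA hw
    exact absurd (hXA' (h2 hz2)) hz1
  · -- Aᶜ ⊆ Xᶜ, B ⊆ Xᶜ : X ⊆ A ∩ Bᶜ
    have hKX : K ⊆ Xᶜ := fun z hz hzX => h2 (hKsub hz).2 hzX
    have hK'X : K' ⊆ Xᶜ := fun z hz hzX => h1 (hK'sub hz).1 hzX
    exact ⟨Or.inr (Or.inl hKX), Or.inr (Or.inl hK'X)⟩
  · -- Aᶜ ⊆ Xᶜ, Bᶜ ⊆ X : Bᶜ ⊆ X ⊆ A ⟹ Aᶜ ∩ Bᶜ = ∅ contra hBR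
    obtain ⟨z, hz1, hz2⟩ := hBR
    have hXA' : X ⊆ A := by
      intro w hw
      by_contra hwA
      exact h1 hwA hw
    exact absurd (hXA' (h2 hz2)) hz1
  · -- Aᶜ ⊆ Xᶜ, Bᶜ ⊆ Xᶜ : X ⊆ A ∩ B
    have hXsub : X ⊆ A ∩ B := by
      intro z hz
      constructor
      · by_contra hzA
        exact h1 hzA hz
      · by_contra hzB
        exact h2 hzB hz
    have hK'X : K' ⊆ Xᶜ := fun z hz hzX => (hK'sub hz).1 (hXsub hzX).1
    refine ⟨?_, Or.inr (Or.inl hK'X)⟩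
    rcases dichK X hXconn hXsub with h | h
    · exact Or.inr (Or.inr (Or.inr (fun z hz hzX => hz (h hzX))))
    · exact Or.inr (Or.inl (disj_of_subset (by rw [Set.inter_comm]; exact h)))

end Corners

section Counting
variable {G : SimpleGraph V}

lemma mdeg_compl (k : ℕ) (C : Set V) : mdeg G k Cᶜ = mdeg G k C := by
  unfold mdeg
  congr 1
  ext X
  simp only [Set.mem_setOf_eq, nested_compl_left]

lemma cutsSplitting_compl {α : ℤ → V} {C : Set V} (h : C ∈ cutsSplitting G α) :
    Cᶜ ∈ cutsSplitting G α :=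
  ⟨h.1.compl, h.2.2, by rw [compl_compl]; exact h.2.1⟩

lemma cutsMin_compl {α : ℤ → V} {C : Set V} (h : C ∈ cutsMin G α) :
    Cᶜ ∈ cutsMin G α :=
  ⟨cutsSplitting_compl h.1, fun Y hY => by rw [weight_compl]; exact h.2 Y hY⟩

lemma cutsOpt_compl {k : ℕ} {α : ℤ → V} {C : Set V} (h : C ∈ cutsOpt G k α) :
    Cᶜ ∈ cutsOpt G k α :=
  ⟨cutsMin_compl h.1, fun Y hY => by rw [mdeg_compl]; exact h.2 Y hY⟩

lemma infinite_inter_split {α : ℤ → V} {P Q : Set V}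
    (h : (Set.range α ∩ P).Infinite) :
    (Set.range α ∩ (P ∩ Q)).Infinite ∨ (Set.range α ∩ (P ∩ Qᶜ)).Infinite := by
  classical
  have heq : Set.range α ∩ (P ∩ Q) ∪ Set.range α ∩ (P ∩ Qᶜ) = Set.range α ∩ P := by
    ext z
    constructor
    · rintro (⟨h1, h2, -⟩ | ⟨h1, h2, -⟩) <;> exact ⟨h1, h2⟩
    · rintro ⟨h1, h2⟩
      by_cases hz : z ∈ Q
      · exact Or.inl ⟨h1, h2, hz⟩
      · exact Or.inr ⟨h1, h2, hz⟩
  rw [← Set.infinite_union, heq]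
  exact h

/-- A corner of two cuts contains a component splitting `α`, of no larger weight. -/
lemma corner_split (hc : G.Connected) {α : ℤ → V} (hα : IsBiInfinitePath G α)
    {A B : Set V} (hA : IsCut G A) (hB : IsCut G B) (hcc : (Aᶜ ∩ Bᶜ).Nonempty)
    (hinf : (Set.range α ∩ (A ∩ B)).Infinite)
    (hos : (Set.range α ∩ (A ∩ B)ᶜ).Infinite) :
    ∃ t ∈ A ∩ B, compOf G (A ∩ B) t ∈ cutsSplitting G α ∧
      weight G (compOf G (A ∩ B) t) ≤ weight G (A ∩ B) := by
  have hbd : (edgeBoundary G (A ∩ B)).Finite :=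
    (hA.2.2.2.2.union hB.2.2.2.2).subset edgeBoundary_inter_subset
  obtain ⟨t, ht, htinf⟩ := exists_tail_component hα hbd hinf
  refine ⟨t, ht, ⟨corner_cut hc hA hB hcc ht, htinf, ?_⟩, ?_⟩
  · exact hos.mono (Set.inter_subset_inter_right _ (Set.compl_subset_compl.2 compOf_subset))
  · exact Set.ncard_le_ncard edgeBoundary_compOf_subset hbd

/-- The central counting lemma. -/
lemma corner_count (hc : G.Connected) (k : ℕ) {A B : Set V}
    (hA : IsCutLe G k A) (hB : IsCutLe G k B) (hnn : ¬ Nested A B)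
    {tK tK' : V} (htK : tK ∈ A ∩ B) (htK' : tK' ∈ Aᶜ ∩ Bᶜ) :
    mdeg G k (compOf G (A ∩ B) tK) + mdeg G k (compOf G (Aᶜ ∩ Bᶜ) tK') + 2 ≤
      mdeg G k A + mdeg G k B := by
  classical
  have hKcut : IsCut G (compOf G (A ∩ B) tK) := corner_cut hc hA.1 hB.1 ⟨tK', htK'⟩ htK
  have hK'cut : IsCut G (compOf G (Aᶜ ∩ Bᶜ) tK') := by
    refine corner_cut hc hA.1.compl hB.1.compl ?_ htK'
    rw [compl_compl, compl_compl]
    exact ⟨tK, htK⟩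
  set K := compOf G (A ∩ B) tK with hKdef
  set K' := compOf G (Aᶜ ∩ Bᶜ) tK' with hK'def
  have hKsub : K ⊆ A ∩ B := compOf_subset
  have hK'sub : K' ⊆ Aᶜ ∩ Bᶜ := compOf_subset
  set NA := {X : Set V | IsCutLe G k X ∧ ¬ Nested A X} with hNA
  set NB := {X : Set V | IsCutLe G k X ∧ ¬ Nested B X} with hNB
  set NK := {X : Set V | IsCutLe G k X ∧ ¬ Nested K X} with hNK
  set NK' := {X : Set V | IsCutLe G k X ∧ ¬ Nested K' X} with hNK'
  have hNAfin : NA.Finite := notNested_finite hc hA.1 k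
  have hNBfin : NB.Finite := notNested_finite hc hB.1 k
  have hNKfin : NK.Finite := notNested_finite hc hKcut k
  have hNK'fin : NK'.Finite := notNested_finite hc hK'cut k
  have hABne : A ≠ B := by
    rintro rfl
    exact hnn (Or.inl subset_rfl)
  have hKA : Nested K A := Or.inl (hKsub.trans Set.inter_subset_left)
  have hKB : Nested K B := Or.inl (hKsub.trans Set.inter_subset_right)
  have hK'A : Nested K' A := Or.inr (Or.inl (hK'sub.trans Set.inter_subset_left))
  have hK'B : Nested K' B := Or.inr (Or.inl (hK'sub.trans Set.inter_subset_right))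
  have hsub1 : NK ∪ NK' ⊆ (NA ∪ NB) \ {A, B} := by
    rintro X hX
    have hXk : IsCutLe G k X := by
      rcases hX with ⟨h, -⟩ | ⟨h, -⟩ <;> exact h
    constructor
    · by_contra hmem
      have hXA : Nested A X := by
        by_contra hno
        exact hmem (Or.inl ⟨hXk, hno⟩)
      have hXB : Nested B X := by
        by_contra hno
        exact hmem (Or.inr ⟨hXk, hno⟩)
      obtain ⟨hn1, hn2⟩ := nested_corner_main hnn htK htK' hXk.1 hXA hXB
      rcases hX with ⟨-, h⟩ | ⟨-, h⟩
      · exact h hn1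
      · exact h hn2
    · intro hmem
      rcases hmem with rfl | rfl
      · rcases hX with ⟨-, h⟩ | ⟨-, h⟩
        · exact h hKA
        · exact h hK'A
      · rcases hX with ⟨-, h⟩ | ⟨-, h⟩
        · exact h hKB
        · exact h hK'B
  have hsub2 : NK ∩ NK' ⊆ NA ∩ NB := by
    rintro X ⟨⟨hXk, hX1⟩, ⟨-, hX2⟩⟩
    constructor
    · refine ⟨hXk, fun hXA => ?_⟩
      rcases nested_of_subsets (hKsub.trans Set.inter_subset_left)
        (hK'sub.trans Set.inter_subset_left) hXA with h | h
      · exact hX1 h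
      · exact hX2 h
    · refine ⟨hXk, fun hXB => ?_⟩
      rcases nested_of_subsets (hKsub.trans Set.inter_subset_right)
        (hK'sub.trans Set.inter_subset_right) hXB with h | h
      · exact hX1 h
      · exact hX2 h
  have hABmem : ({A, B} : Set (Set V)) ⊆ NA ∪ NB := by
    rintro X (rfl | rfl)
    · exact Or.inr ⟨hA, fun h => hnn (nested_comm.1 h)⟩
    · exact Or.inl ⟨hB, hnn⟩
  have hpairfin : ({A, B} : Set (Set V)).Finite := (Set.finite_singleton B).insert A
  have c1 : (NK ∪ NK').ncard + (NK ∩ NK').ncard = NK.ncard + NK'.ncard :=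
    Set.ncard_union_add_ncard_inter _ _ hNKfin hNK'fin
  have c2 : (NA ∪ NB).ncard + (NA ∩ NB).ncard = NA.ncard + NB.ncard :=
    Set.ncard_union_add_ncard_inter _ _ hNAfin hNBfin
  have c3 : (NK ∪ NK').ncard ≤ ((NA ∪ NB) \ {A, B}).ncard :=
    Set.ncard_le_ncard hsub1 ((hNAfin.union hNBfin).diff)
  have c4 : ((NA ∪ NB) \ {A, B}).ncard = (NA ∪ NB).ncard - ({A, B} : Set (Set V)).ncard :=
    Set.ncard_diff hABmem hpairfin
  have c5 : ({A, B} : Set (Set V)).ncard = 2 := Set.ncard_pair hABne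
  have c6 : ({A, B} : Set (Set V)).ncard ≤ (NA ∪ NB).ncard :=
    Set.ncard_le_ncard hABmem (hNAfin.union hNBfin)
  have c7 : (NK ∩ NK').ncard ≤ (NA ∩ NB).ncard :=
    Set.ncard_le_ncard hsub2 (hNAfin.inter_of_left _)
  have hmdA : mdeg G k A = NA.ncard := rfl
  have hmdB : mdeg G k B = NB.ncard := rfl
  have hmdK : mdeg G k K = NK.ncard := rfl
  have hmdK' : mdeg G k K' = NK'.ncard := rfl
  rw [hmdK, hmdK', hmdA, hmdB]
  omega

/-- Good-case contradiction: opposite corners split the two paths. -/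
lemma crossing_contradiction (hc : G.Connected) {k : ℕ}
    {α β : ℤ → V} (hα : IsBiInfinitePath G α) (hβ : IsBiInfinitePath G β)
    {A B : Set V} (hAopt : A ∈ cutsOpt G k α) (hBopt : B ∈ cutsOpt G k β)
    (hAk : IsCutLe G k A) (hBk : IsCutLe G k B)
    (hnn : ¬ Nested A B)
    (haTL : (Set.range α ∩ (A ∩ B)).Infinite)
    (hbBR : (Set.range β ∩ (Aᶜ ∩ Bᶜ)).Infinite) : False := by
  obtain ⟨hTL, hTR, hBL, hBR⟩ := not_nested_corners hnn
  have hAcut : IsCut G A := hAk.1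
  have hBcut : IsCut G B := hBk.1
  obtain ⟨t, ht, hKsp, hKw⟩ := corner_split hc hα hAcut hBcut hBR haTL
    ((hAopt.1.1.2.2).mono (Set.inter_subset_inter_right _
      (Set.compl_subset_compl.2 Set.inter_subset_left)))
  have hcc' : ((Aᶜ)ᶜ ∩ (Bᶜ)ᶜ).Nonempty := by
    rw [compl_compl, compl_compl]
    exact hTL
  obtain ⟨t', ht', hK'sp, hK'w⟩ := corner_split hc hβ hAcut.compl hBcut.compl hcc' hbBR
    ((hBopt.1.1.2.1).mono (Set.inter_subset_inter_right _ (by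
      intro z hz hzc
      exact hzc.2 hz)))
  set K := compOf G (Aᶜ ∩ Bᶜ) t' with hK'def
  -- weights
  have hsub : weight G (A ∩ B) + weight G (A ∪ B) ≤ weight G A + weight G B :=
    weight_submodular hAcut.2.2.2.2 hBcut.2.2.2.2
  have hw1 : weight G A ≤ weight G (compOf G (A ∩ B) t) := hAopt.1.2 _ hKsp
  have hw2 : weight G B ≤ weight G K := hBopt.1.2 _ hK'sp
  have hK'w' : weight G K ≤ weight G (A ∪ B) := by
    rw [← weight_corner_compl]
    exact hK'w
  have heq1 : weight G (compOf G (A ∩ B) t) = weight G A := by omega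
  have heq2 : weight G K = weight G B := by omega
  have hKmin : compOf G (A ∩ B) t ∈ cutsMin G α :=
    ⟨hKsp, fun Y hY => by rw [heq1]; exact hAopt.1.2 Y hY⟩
  have hK'min : K ∈ cutsMin G β :=
    ⟨hK'sp, fun Y hY => by rw [heq2]; exact hBopt.1.2 Y hY⟩
  have hm1 : mdeg G k A ≤ mdeg G k (compOf G (A ∩ B) t) := hAopt.2 _ hKmin
  have hm2 : mdeg G k B ≤ mdeg G k K := hBopt.2 _ hK'min
  have hcount := corner_count hc k hAk hBk hnn ht ht'
  rw [← hK'def] at hcount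
  omega

/-- Bad-case contradiction: both corners of one diagonal split `α`, both of the other
split `β`. -/
lemma crossing_contradiction2 (hc : G.Connected) {k : ℕ}
    {α β : ℤ → V} (hα : IsBiInfinitePath G α) (hβ : IsBiInfinitePath G β)
    {A B : Set V} (hAopt : A ∈ cutsOpt G k α) (hBopt : B ∈ cutsOpt G k β)
    (hAk : IsCutLe G k A) (hBk : IsCutLe G k B)
    (hnn : ¬ Nested A B)
    (haTL : (Set.range α ∩ (A ∩ B)).Infinite)
    (haBR : (Set.range α ∩ (Aᶜ ∩ Bᶜ)).Infinite)
    (hbTR : (Set.range β ∩ (A ∩ Bᶜ)).Infinite)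
    (hbBL : (Set.range β ∩ (Aᶜ ∩ B)).Infinite) : False := by
  obtain ⟨hTL, hTR, hBL, hBR⟩ := not_nested_corners hnn
  have hAcut : IsCut G A := hAk.1
  have hBcut : IsCut G B := hBk.1
  -- the four corner components
  obtain ⟨t1, ht1, hK1sp, hK1w⟩ := corner_split hc hα hAcut hBcut hBR haTL
    ((hAopt.1.1.2.2).mono (Set.inter_subset_inter_right _
      (Set.compl_subset_compl.2 Set.inter_subset_left)))
  have hcc2 : ((Aᶜ)ᶜ ∩ (Bᶜ)ᶜ).Nonempty := by
    rw [compl_compl, compl_compl]; exact hTL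
  obtain ⟨t2, ht2, hK2sp, hK2w⟩ := corner_split hc hα hAcut.compl hBcut.compl hcc2 haBR
    ((hAopt.1.1.2.1).mono (Set.inter_subset_inter_right _ (by
      intro z hz hzc
      exact hzc.1 hz)))
  have hcc3 : (Aᶜ ∩ (Bᶜ)ᶜ).Nonempty := by
    rw [compl_compl]; exact hBL
  obtain ⟨t3, ht3, hK3sp, hK3w⟩ := corner_split hc hβ hAcut hBcut.compl hcc3 hbTR
    ((hBopt.1.1.2.1).mono (Set.inter_subset_inter_right _ (by
      intro z hz hzc
      exact hzc.2 hz)))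
  have hcc4 : ((Aᶜ)ᶜ ∩ Bᶜ).Nonempty := by
    rw [compl_compl]; exact hTR
  obtain ⟨t4, ht4, hK4sp, hK4w⟩ := corner_split hc hβ hAcut.compl hBcut hcc4 hbBL
    ((hBopt.1.1.2.2).mono (Set.inter_subset_inter_right _
      (Set.compl_subset_compl.2 Set.inter_subset_right)))
  -- weight equalities
  have hsub1 : weight G (A ∩ B) + weight G (A ∪ B) ≤ weight G A + weight G B :=
    weight_submodular hAcut.2.2.2.2 hBcut.2.2.2.2
  have hsub2 : weight G (A ∩ Bᶜ) + weight G (A ∪ Bᶜ) ≤ weight G A + weight G Bᶜ :=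
    weight_submodular hAcut.2.2.2.2 (edgeBoundary_compl_finite hBcut.2.2.2.2)
  rw [weight_compl] at hsub2
  have hw1 : weight G A ≤ weight G (compOf G (A ∩ B) t1) := hAopt.1.2 _ hK1sp
  have hw2 : weight G A ≤ weight G (compOf G (Aᶜ ∩ Bᶜ) t2) := hAopt.1.2 _ hK2sp
  have hw3 : weight G B ≤ weight G (compOf G (A ∩ Bᶜ) t3) := hBopt.1.2 _ hK3sp
  have hw4 : weight G B ≤ weight G (compOf G (Aᶜ ∩ B) t4) := hBopt.1.2 _ hK4sp
  have hK2w' : weight G (compOf G (Aᶜ ∩ Bᶜ) t2) ≤ weight G (A ∪ B) := by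
    rw [← weight_corner_compl]; exact hK2w
  have hK4w' : weight G (compOf G (Aᶜ ∩ B) t4) ≤ weight G (A ∪ Bᶜ) := by
    have heq : (A ∪ Bᶜ) = (Aᶜ ∩ B)ᶜ := by
      rw [Set.compl_inter, compl_compl]
    rw [heq, weight_compl]
    exact hK4w
  have heq1 : weight G (compOf G (A ∩ B) t1) = weight G A := by omega
  have heq2 : weight G (compOf G (Aᶜ ∩ Bᶜ) t2) = weight G A := by omega
  have heq3 : weight G (compOf G (A ∩ Bᶜ) t3) = weight G B := by omega
  have heq4 : weight G (compOf G (Aᶜ ∩ B) t4) = weight G B := by omega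
  have hK1min : compOf G (A ∩ B) t1 ∈ cutsMin G α :=
    ⟨hK1sp, fun Y hY => by rw [heq1]; exact hAopt.1.2 Y hY⟩
  have hK2min : compOf G (Aᶜ ∩ Bᶜ) t2 ∈ cutsMin G α :=
    ⟨hK2sp, fun Y hY => by rw [heq2]; exact hAopt.1.2 Y hY⟩
  have hK3min : compOf G (A ∩ Bᶜ) t3 ∈ cutsMin G β :=
    ⟨hK3sp, fun Y hY => by rw [heq3]; exact hBopt.1.2 Y hY⟩
  have hK4min : compOf G (Aᶜ ∩ B) t4 ∈ cutsMin G β :=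
    ⟨hK4sp, fun Y hY => by rw [heq4]; exact hBopt.1.2 Y hY⟩
  have hm1 : mdeg G k A ≤ mdeg G k (compOf G (A ∩ B) t1) := hAopt.2 _ hK1min
  have hm2 : mdeg G k A ≤ mdeg G k (compOf G (Aᶜ ∩ Bᶜ) t2) := hAopt.2 _ hK2min
  have hm3 : mdeg G k B ≤ mdeg G k (compOf G (A ∩ Bᶜ) t3) := hBopt.2 _ hK3min
  have hm4 : mdeg G k B ≤ mdeg G k (compOf G (Aᶜ ∩ B) t4) := hBopt.2 _ hK4min
  have hcount1 := corner_count hc k hAk hBk hnn ht1 ht2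
  have hnn2 : ¬ Nested A Bᶜ := fun h => hnn (nested_compl_right.1 h)
  have ht4' : t4 ∈ Aᶜ ∩ (Bᶜ)ᶜ := by rw [compl_compl]; exact ht4
  have hcount2 := corner_count hc k hAk hBk.compl hnn2 ht3 ht4'
  rw [mdeg_compl] at hcount2
  have hcomp4 : compOf G (Aᶜ ∩ (Bᶜ)ᶜ) t4 = compOf G (Aᶜ ∩ B) t4 := by
    rw [compl_compl]
  rw [hcomp4] at hcount2
  omega

end Counting

section Nestedness
variable {G : SimpleGraph V}

lemma weight_le_of_copt {k : ℕ} (hacc : AccessibleWith G k) {α : ℤ → V}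
    (hα : IsBiInfinitePath G α) {C : Set V} (hC : C ∈ cutsMin G α) : weight G C ≤ k := by
  obtain ⟨C₀, hC₀, hw⟩ := hacc α hα ⟨C, hC.1⟩
  exact le_trans (hC.2 C₀ hC₀) hw

/-- Optimal cuts are pairwise nested. -/
theorem copt_nested (hc : G.Connected) {k : ℕ} (hacc : AccessibleWith G k)
    {D E : Set V} (hD : D ∈ COpt G k) (hE : E ∈ COpt G k) : Nested D E := by
  by_contra hnn
  obtain ⟨α, hα, hDopt⟩ := hD
  obtain ⟨β, hβ, hEopt⟩ := hE
  have hDk : IsCutLe G k D := ⟨hDopt.1.1.1, weight_le_of_copt hacc hα hDopt.1⟩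
  have hEk : IsCutLe G k E := ⟨hEopt.1.1.1, weight_le_of_copt hacc hβ hEopt.1⟩
  have hαD : (Set.range α ∩ D).Infinite := hDopt.1.1.2.1
  have hαDc : (Set.range α ∩ Dᶜ).Infinite := hDopt.1.1.2.2
  have hβE : (Set.range β ∩ E).Infinite := hEopt.1.1.2.1
  have hβEc : (Set.range β ∩ Eᶜ).Infinite := hEopt.1.1.2.2
  -- complement versions of optimality
  have hDcopt : Dᶜ ∈ cutsOpt G k α := cutsOpt_compl hDopt
  have hEcopt : Eᶜ ∈ cutsOpt G k β := cutsOpt_compl hEopt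
  -- splitting of infinite pieces over the corners
  have haTop := infinite_inter_split (Q := E) hαD
  have haBot := infinite_inter_split (Q := E) hαDc
  have hbE := infinite_inter_split (Q := D) hβE
  have hbEc := infinite_inter_split (Q := D) hβEc
  -- normalize: corners as D∩E etc.
  have hbLeft : (Set.range β ∩ (D ∩ E)).Infinite ∨ (Set.range β ∩ (Dᶜ ∩ E)).Infinite := by
    rcases hbE with h | h
    · exact Or.inl (h.mono (by rw [Set.inter_comm E D]))
    · exact Or.inr (h.mono (by rw [Set.inter_comm E Dᶜ]))
  have hbRight : (Set.range β ∩ (D ∩ Eᶜ)).Infinite ∨ (Set.range β ∩ (Dᶜ ∩ Eᶜ)).Infinite := by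
    rcases hbEc with h | h
    · exact Or.inl (h.mono (by rw [Set.inter_comm Eᶜ D]))
    · exact Or.inr (h.mono (by rw [Set.inter_comm Eᶜ Dᶜ]))
  have hnnDE : ¬ Nested D E := hnn
  have hnnDEc : ¬ Nested D Eᶜ := fun h => hnn (nested_compl_right.1 h)
  have hnnDcEc : ¬ Nested Dᶜ Eᶜ := fun h => hnn (nested_compl_right.1 (nested_compl_left.1 h))
  have hnnDcE : ¬ Nested Dᶜ E := fun h => hnn (nested_compl_left.1 h)
  -- case analysis
  by_cases h1 : (Set.range α ∩ (D ∩ E)).Infinite ∧ (Set.range β ∩ (Dᶜ ∩ Eᶜ)).Infinite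
  · exact crossing_contradiction hc hα hβ hDopt hEopt hDk hEk hnnDE h1.1 h1.2
  by_cases h2 : (Set.range α ∩ (Dᶜ ∩ Eᶜ)).Infinite ∧ (Set.range β ∩ (D ∩ E)).Infinite
  · refine crossing_contradiction hc hα hβ hDcopt hEcopt hDk.compl hEk.compl hnnDcEc h2.1 ?_
    have : (Dᶜ)ᶜ ∩ (Eᶜ)ᶜ = D ∩ E := by rw [compl_compl, compl_compl]
    rw [this]
    exact h2.2
  by_cases h3 : (Set.range α ∩ (D ∩ Eᶜ)).Infinite ∧ (Set.range β ∩ (Dᶜ ∩ E)).Infinite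
  · refine crossing_contradiction hc hα hβ hDopt hEcopt hDk hEk.compl hnnDEc h3.1 ?_
    have : Dᶜ ∩ (Eᶜ)ᶜ = Dᶜ ∩ E := by rw [compl_compl]
    rw [this]
    exact h3.2
  by_cases h4 : (Set.range α ∩ (Dᶜ ∩ E)).Infinite ∧ (Set.range β ∩ (D ∩ Eᶜ)).Infinite
  · refine crossing_contradiction hc hα hβ hDcopt hEopt hDk.compl hEk hnnDcE h4.1 ?_
    have : (Dᶜ)ᶜ ∩ Eᶜ = D ∩ Eᶜ := by rw [compl_compl]
    rw [this]
    exact h4.2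
  -- bad case
  push_neg at h1 h2 h3 h4
  rcases haTop with hTL | hTR
  · -- aTL holds
    have hbTR : (Set.range β ∩ (D ∩ Eᶜ)).Infinite := by
      rcases hbRight with h | h
      · exact h
      · exact absurd h (h1 hTL).not_infinite
    have haBR : (Set.range α ∩ (Dᶜ ∩ Eᶜ)).Infinite := by
      rcases haBot with h | h
      · exact absurd hbTR (h4 h).not_infinite
      · exact h
    have hbBL : (Set.range β ∩ (Dᶜ ∩ E)).Infinite := by
      rcases hbLeft with h | h
      · exact absurd h (h2 haBR).not_infinite
      · exact h
    exact crossing_contradiction2 hc hα hβ hDopt hEopt hDk hEk hnnDE hTL haBR hbTR hbBL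
  · -- aTR holds: use the pair (D, Eᶜ)
    have hbTL : (Set.range β ∩ (D ∩ E)).Infinite := by
      rcases hbLeft with h | h
      · exact h
      · exact absurd h (h3 hTR).not_infinite
    have haBL : (Set.range α ∩ (Dᶜ ∩ E)).Infinite := by
      rcases haBot with h | h
      · exact h
      · exact absurd hbTL (h2 h).not_infinite
    have hbBR : (Set.range β ∩ (Dᶜ ∩ Eᶜ)).Infinite := by
      rcases hbRight with h | h
      · exact absurd h (h4 haBL).not_infinite
      · exact h
    refine crossing_contradiction2 hc hα hβ hDopt hEcopt hDk hEk.compl hnnDEc hTR ?_ ?_ hbBR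
    · show (Set.range α ∩ (Dᶜ ∩ (Eᶜ)ᶜ)).Infinite
      rw [compl_compl]
      exact haBL
    · show (Set.range β ∩ (D ∩ (Eᶜ)ᶜ)).Infinite
      rw [compl_compl]
      exact hbTL

end Nestedness

section Blocks
variable {G : SimpleGraph V}

lemma copt_isCut {k : ℕ} {C : Set V} (hC : C ∈ COpt G k) : IsCut G C := by
  obtain ⟨α, hα, hopt⟩ := hC
  exact hopt.1.1.1

lemma cls_subset_copt {k : ℕ} {C : Set V} : cls G k C ⊆ COpt G k := fun D hD => hD.1

lemma mem_cls_self {k : ℕ} {C : Set V} (hC : C ∈ COpt G k) : C ∈ cls G k C :=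
  ⟨hC, Or.inl rfl⟩

lemma cls_ssubset {k : ℕ} {C D : Set V} (hD : D ∈ cls G k C) (hne : D ≠ C) : Cᶜ ⊂ D := by
  rcases hD.2 with h | h
  · exact absurd h.symm hne
  · exact h.1

/-- Distinct members of a class have disjoint complements. -/
lemma cls_compl_disj (hc : G.Connected) {k : ℕ} (hacc : AccessibleWith G k)
    {C : Set V} (hC : C ∈ COpt G k) :
    ∀ D ∈ cls G k C, ∀ E ∈ cls G k C, D ≠ E → Dᶜ ∩ Eᶜ = ∅ := by
  have key : ∀ D ∈ cls G k C, ∀ E ∈ cls G k C, D ≠ E → D ≠ C → E ≠ C → Dᶜ ∩ Eᶜ = ∅ := by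
    intro D hD E hE hDE hDC hEC
    have hssD : Cᶜ ⊂ D := cls_ssubset hD hDC
    have hssE : Cᶜ ⊂ E := cls_ssubset hE hEC
    have hnest : Nested D E := copt_nested hc hacc (cls_subset_copt hD) (cls_subset_copt hE)
    have hCc : Cᶜ.Nonempty := (copt_isCut hC).2.1
    rcases hnest with h | h | h | h
    · -- D ⊆ E : minimality of E
      exfalso
      rcases hE.2 with h' | h'
      · exact hEC h'.symm
      · exact hDE (h'.2 D (cls_subset_copt hD) hssD h)
    · -- D ⊆ Eᶜ : Cᶜ would be empty
      exfalso
      obtain ⟨x, hx⟩ := hCc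
      exact h (hssD.1 hx) (hssE.1 hx)
    · -- Dᶜ ⊆ E : exactly the claim
      rw [Set.eq_empty_iff_forall_notMem]
      rintro z ⟨hz1, hz2⟩
      exact hz2 (h hz1)
    · -- Dᶜ ⊆ Eᶜ, i.e. E ⊆ D : minimality of D
      exfalso
      have hED : E ⊆ D := Set.compl_subset_compl.1 h
      rcases hD.2 with h' | h'
      · exact hDC h'.symm
      · exact hDE (h'.2 E (cls_subset_copt hE) hssE hED).symm
  intro D hD E hE hDE
  by_cases hDC : D = C
  · subst hDC
    have hEC : E ≠ D := fun h => hDE h.symm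
    have hss : Dᶜ ⊂ E := cls_ssubset hE (fun h => hDE h.symm)
    rw [Set.eq_empty_iff_forall_notMem]
    rintro z ⟨hz1, hz2⟩
    exact hz2 (hss.1 hz1)
  · by_cases hEC : E = C
    · subst hEC
      have hss : Eᶜ ⊂ D := cls_ssubset hD hDC
      rw [Set.eq_empty_iff_forall_notMem]
      rintro z ⟨hz1, hz2⟩
      exact hz1 (hss.1 hz2)
    · exact key D hD E hE hDE hDC hEC

lemma block_subset_nbhd {k κ : ℕ} {C D : Set V} (hD : D ∈ cls G k C) :
    block G k κ C ⊆ nbhd G κ D := by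
  intro z hz
  rw [block, Set.mem_iInter₂] at hz
  exact hz D hD

lemma mem_block_iff {k κ : ℕ} {C : Set V} {z : V} :
    z ∈ block G k κ C ↔ ∀ D ∈ cls G k C, z ∈ nbhd G κ D := by
  rw [block, Set.mem_iInter₂]

lemma collar_subset_block (hc : G.Connected) {k κ : ℕ} (hacc : AccessibleWith G k)
    {C : Set V} (hC : C ∈ COpt G k) {D : Set V} (hD : D ∈ cls G k C) :
    nbhd G κ D ∩ Dᶜ ⊆ block G k κ C := by
  rintro z ⟨hz1, hz2⟩
  rw [mem_block_iff]
  intro E hE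
  by_cases hDE : D = E
  · subst hDE; exact hz1
  · have hdisj := cls_compl_disj hc hacc hC D hD E hE hDE
    have hzE : z ∈ E := by
      by_contra hzE
      have : z ∈ Dᶜ ∩ Eᶜ := ⟨hz2, hzE⟩
      rw [hdisj] at this
      exact this
    exact subset_nbhd hzE

lemma nbhd_empty {r : ℕ} : nbhd G r (∅ : Set V) = ∅ := by
  rw [Set.eq_empty_iff_forall_notMem]
  rintro z ⟨u, hu, -⟩
  exact hu

lemma walkIn_chainN {T : Set V} (f : ℕ → V) :
    ∀ (N : ℕ), (∀ t, t < N → G.Adj (f t) (f (t + 1))) → (∀ t, t ≤ N → f t ∈ T) →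
      WalkIn G T (f 0) (f N) := by
  intro N
  induction N with
  | zero => intro _ hmem; exact walkIn_refl (hmem 0 le_rfl)
  | succ N ihN =>
    intro hadj hmem
    exact (ihN (fun t ht => hadj t (by omega)) (fun t ht => hmem t (by omega))).trans
      (walkIn_of_adj (hadj N (by omega)) (hmem N (by omega)) (hmem (N + 1) le_rfl))

lemma dist_le_one_of_adj {x y : V} (h : G.Adj x y) : G.dist x y ≤ 1 := by
  have := SimpleGraph.dist_le (SimpleGraph.Walk.cons h SimpleGraph.Walk.nil)
  simpa using this

open scoped Classical in
lemma reroute (hc : G.Connected) {k κ : ℕ} (hκ1 : 1 ≤ κ) (hacc : AccessibleWith G k)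
    {C : Set V} (hC : C ∈ COpt G k)
    (hker : ∀ D ∈ COpt G k, (G.induce (nbhd G κ D ∩ Dᶜ)).Connected)
    (S : Set V) (ℓ : ℕ)
    (Hdiam : ∀ D ∈ cls G k C, ∀ z ∈ nbhd G κ D ∩ Dᶜ, ∀ s ∈ S, s ∈ nbhd G κ D ∩ Dᶜ →
      G.dist z s ≤ ℓ) :
    ∀ (n N : ℕ) (f : ℕ → V), (∀ t, t < N → G.Adj (f t) (f (t + 1))) →
      (∀ t, t ≤ N → (f t ∉ nbhd G ℓ S ∨
        ∃ D ∈ cls G k C, f t ∈ nbhd G κ D ∩ Dᶜ ∧ S ∩ (nbhd G κ D ∩ Dᶜ) = ∅)) →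
      f 0 ∈ block G k κ C → f N ∈ block G k κ C →
      ((Finset.range (N + 1)).filter (fun t => f t ∉ block G k κ C)).card ≤ n →
      WalkIn G (block G k κ C \ S) (f 0) (f N) := by
  classical
  have hgoodS : ∀ (z : V), (z ∉ nbhd G ℓ S ∨
      ∃ D ∈ cls G k C, z ∈ nbhd G κ D ∩ Dᶜ ∧ S ∩ (nbhd G κ D ∩ Dᶜ) = ∅) → z ∉ S := by
    rintro z (h | ⟨D, hD, hz, hS⟩) hzS
    · exact h (subset_nbhd hzS)
    · have hmem : z ∈ S ∩ (nbhd G κ D ∩ Dᶜ) := ⟨hzS, hz⟩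
      rw [hS] at hmem
      exact hmem
  intro n
  induction n with
  | zero =>
    intro N f hadj hgood h0 hN hcard
    have hall : ∀ t, t ≤ N → f t ∈ block G k κ C := by
      intro t ht
      by_contra hout
      have hmem : t ∈ (Finset.range (N + 1)).filter (fun t => f t ∉ block G k κ C) := by
        simp only [Finset.mem_filter, Finset.mem_range]
        exact ⟨by omega, hout⟩
      have := Finset.card_pos.2 ⟨t, hmem⟩
      omega
    exact walkIn_chainN f N hadj (fun t ht => ⟨hall t ht, hgoodS _ (hgood t ht)⟩)
  | succ n ih =>
    intro N f hadj hgood h0 hN hcard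
    by_cases hallin : ∀ t, t ≤ N → f t ∈ block G k κ C
    · exact walkIn_chainN f N hadj (fun t ht => ⟨hallin t ht, hgoodS _ (hgood t ht)⟩)
    · push_neg at hallin
      have hex : ∃ t, t ≤ N ∧ f t ∉ block G k κ C := hallin
      set m := Nat.find hex with hmdef
      obtain ⟨hmN, hmout⟩ := Nat.find_spec hex
      rw [← hmdef] at hmN hmout
      have hmin : ∀ t, t < m → f t ∈ block G k κ C := by
        intro t ht
        by_contra hout
        exact Nat.find_min hex ht ⟨by omega, hout⟩
      have hm0 : m ≠ 0 := fun h => hmout (by rw [h]; exact h0)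
      have hmNe : m ≠ N := fun h => hmout (by rw [h]; exact hN)
      have hmltN : m < N := by omega
      clear_value m
      clear hmdef
      have hnotall : ¬ ∀ D ∈ cls G k C, f m ∈ nbhd G κ D := fun h => hmout (mem_block_iff.2 h)
      push_neg at hnotall
      obtain ⟨D₀, hD₀cls, hD₀n⟩ := hnotall
      have hfmX : f m ∈ D₀ᶜ := fun h => hD₀n (subset_nbhd h)
      have hadjm : G.Adj (f (m - 1)) (f m) := by
        have h := hadj (m - 1) (by omega)
        have heq : m - 1 + 1 = m := by omega
        rwa [heq] at h
      have hfiblk : f (m - 1) ∈ block G k κ C := hmin (m - 1) (by omega)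
      have hfiX : f (m - 1) ∈ D₀ᶜ := by
        intro h
        refine hD₀n ⟨f (m - 1), h, ?_⟩
        rw [SimpleGraph.dist_comm]
        exact (dist_le_one_of_adj hadjm).trans hκ1
      have hficollar : f (m - 1) ∈ nbhd G κ D₀ ∩ D₀ᶜ :=
        ⟨block_subset_nbhd hD₀cls hfiblk, hfiX⟩
      have hexj : ∃ t, m < t ∧ t ≤ N ∧ (f t ∉ D₀ᶜ ∨ f t ∈ nbhd G κ D₀ ∩ D₀ᶜ) := by
        refine ⟨N, by omega, le_rfl, ?_⟩
        by_cases hNX : f N ∈ D₀ᶜ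
        · exact Or.inr ⟨block_subset_nbhd hD₀cls hN, hNX⟩
        · exact Or.inl hNX
      set j := Nat.find hexj with hjdef
      obtain ⟨hjm, hjN, hjQ⟩ := Nat.find_spec hexj
      rw [← hjdef] at hjm hjN hjQ
      have hjint : ∀ t, m < t → t < j → f t ∈ D₀ᶜ ∧ f t ∉ nbhd G κ D₀ := by
        intro t ht1 ht2
        have h := Nat.find_min hexj ht2
        push_neg at h
        have h2 := h ht1 (by omega)
        obtain ⟨h3, h4⟩ := h2
        exact ⟨h3, fun h6 => h4 ⟨h6, h3⟩⟩
      clear_value j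
      clear hjdef
      have hfjcollar : f j ∈ nbhd G κ D₀ ∩ D₀ᶜ := by
        rcases hjQ with hout | hin
        · exfalso
          have hfj : f j ∈ D₀ := Set.notMem_compl_iff.1 hout
          have hadjj : G.Adj (f (j - 1)) (f j) := by
            have h := hadj (j - 1) (by omega)
            have heq : j - 1 + 1 = j := by omega
            rwa [heq] at h
          have hj1 : f (j - 1) ∉ nbhd G κ D₀ := by
            by_cases hjm1 : j - 1 = m
            · rw [hjm1]; exact hD₀n
            · exact (hjint (j - 1) (by omega) (by omega)).2
          exact hj1 ⟨f j, hfj, (dist_le_one_of_adj hadjj).trans hκ1⟩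
        · exact hin
      have hScollar : S ∩ (nbhd G κ D₀ ∩ D₀ᶜ) = ∅ := by
        rcases hgood (m - 1) (by omega) with hno | ⟨D', hD', hmem', hS'⟩
        · rw [Set.eq_empty_iff_forall_notMem]
          rintro s ⟨hs1, hs2⟩
          exact hno ⟨s, hs1, Hdiam D₀ hD₀cls _ hficollar s hs1 hs2⟩
        · have hDD : D' = D₀ := by
            by_contra hne
            have hdisj := cls_compl_disj hc hacc hC D' hD' D₀ hD₀cls hne
            have hmem2 : f (m - 1) ∈ D'ᶜ ∩ D₀ᶜ := ⟨hmem'.2, hfiX⟩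
            rw [hdisj] at hmem2
            exact hmem2
          rw [← hDD]
          exact hS'
      have hcollarconn := hker D₀ (cls_subset_copt hD₀cls)
      obtain ⟨-, hwalk⟩ := induce_connected_iff_walkIn.1 hcollarconn
      have hmiddle : WalkIn G (nbhd G κ D₀ ∩ D₀ᶜ) (f (m - 1)) (f j) :=
        hwalk _ hficollar _ hfjcollar
      have hcolblk : nbhd G κ D₀ ∩ D₀ᶜ ⊆ block G k κ C :=
        collar_subset_block hc hacc hC hD₀cls
      have hmiddle' : WalkIn G (block G k κ C \ S) (f (m - 1)) (f j) := by
        refine hmiddle.mono ?_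
        intro z hz
        refine ⟨hcolblk hz, fun hzS => ?_⟩
        have hmem : z ∈ S ∩ (nbhd G κ D₀ ∩ D₀ᶜ) := ⟨hzS, hz⟩
        rw [hScollar] at hmem
        exact hmem
      have hprefix : WalkIn G (block G k κ C \ S) (f 0) (f (m - 1)) :=
        walkIn_chainN f (m - 1) (fun t ht => hadj t (by omega))
          (fun t ht => ⟨hmin t (by omega), hgoodS _ (hgood t (by omega))⟩)
      set g : ℕ → V := fun t => f (j + t) with hg
      have hsufadj : ∀ t, t < N - j → G.Adj (g t) (g (t + 1)) := by
        intro t ht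
        have h := hadj (j + t) (by omega)
        have heq : j + t + 1 = j + (t + 1) := by omega
        rwa [heq] at h
      have hsufgood : ∀ t, t ≤ N - j → (g t ∉ nbhd G ℓ S ∨
          ∃ D ∈ cls G k C, g t ∈ nbhd G κ D ∩ Dᶜ ∧ S ∩ (nbhd G κ D ∩ Dᶜ) = ∅) :=
        fun t ht => hgood (j + t) (by omega)
      have hg0eq : g 0 = f j := by
        simp only [hg, Nat.add_zero]
      have hg0 : g 0 ∈ block G k κ C := by
        rw [hg0eq]
        exact hcolblk hfjcollar
      have hgNeq : g (N - j) = f N := by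
        simp only [hg]
        congr 1
        omega
      have hgN : g (N - j) ∈ block G k κ C := by rw [hgNeq]; exact hN
      have hsufcard : ((Finset.range (N - j + 1)).filter
          (fun t => g t ∉ block G k κ C)).card ≤ n := by
        have hinj : ∀ t ∈ (Finset.range (N - j + 1)).filter (fun t => g t ∉ block G k κ C),
            j + t ∈ ((Finset.range (N + 1)).filter (fun t => f t ∉ block G k κ C)).erase m := by
          intro t htm
          simp only [Finset.mem_filter, Finset.mem_range] at htm
          refine Finset.mem_erase.2 ⟨by omega, ?_⟩
          simp only [Finset.mem_filter, Finset.mem_range]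
          exact ⟨by omega, htm.2⟩
        have hcard2 : ((Finset.range (N - j + 1)).filter (fun t => g t ∉ block G k κ C)).card ≤
            (((Finset.range (N + 1)).filter (fun t => f t ∉ block G k κ C)).erase m).card := by
          apply Finset.card_le_card_of_injOn (fun t => j + t) hinj
          intro a _ b _ hab
          have hab' : j + a = j + b := hab
          omega
        have hmmem : m ∈ (Finset.range (N + 1)).filter (fun t => f t ∉ block G k κ C) := by
          simp only [Finset.mem_filter, Finset.mem_range]
          exact ⟨by omega, hmout⟩
        have herase := Finset.card_erase_of_mem hmmem
        omega
      have hsuffix := ih (N - j) g hsufadj hsufgood hg0 hgN hsufcard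
      rw [hg0eq, hgNeq] at hsuffix
      exact (hprefix.trans hmiddle').trans hsuffix

end Blocks

section Equivariance
variable {G : SimpleGraph V}

lemma getVert_mem_support' : ∀ {u v : V} (p : G.Walk u v) (i : ℕ), p.getVert i ∈ p.support := by
  intro u v p
  induction p with
  | nil => intro i; simp [SimpleGraph.Walk.getVert, SimpleGraph.Walk.support_nil]
  | @cons a b c hab q ih =>
    intro i
    cases i with
    | zero => simp [SimpleGraph.Walk.getVert_zero, SimpleGraph.Walk.support_cons]
    | succ i =>
      rw [SimpleGraph.Walk.getVert_cons_succ]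
      simp only [SimpleGraph.Walk.support_cons, List.mem_cons]
      exact Or.inr (ih i)

lemma dist_le_of_mem_support {u v w : V} {p : G.Walk u v} (h : w ∈ p.support) :
    G.dist u w ≤ p.length := by
  rw [SimpleGraph.Walk.mem_support_iff_exists_append] at h
  obtain ⟨q, r, rfl⟩ := h
  calc G.dist u w ≤ q.length := SimpleGraph.dist_le q
  _ ≤ (q.append r).length := by rw [SimpleGraph.Walk.length_append]; omega

lemma iso_dist_le (φ : G ≃g G) (hc : G.Connected) (x y : V) :
    G.dist (φ x) (φ y) ≤ G.dist x y := by
  obtain ⟨p, hp⟩ := (hc.preconnected x y).exists_walk_length_eq_dist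
  calc G.dist (φ x) (φ y) ≤ (p.map φ.toHom).length := SimpleGraph.dist_le _
  _ = p.length := SimpleGraph.Walk.length_map _ _
  _ = G.dist x y := hp

lemma iso_dist (φ : G ≃g G) (hc : G.Connected) (x y : V) :
    G.dist (φ x) (φ y) = G.dist x y := by
  refine le_antisymm (iso_dist_le φ hc x y) ?_
  have h := iso_dist_le φ.symm hc (φ x) (φ y)
  simpa using h

lemma iso_walkIn (φ : G ≃g G) {S : Set V} {x y : V} (h : WalkIn G S x y) :
    WalkIn G (φ '' S) (φ x) (φ y) := by
  obtain ⟨p, hp⟩ := h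
  refine ⟨p.map φ.toHom, fun w hw => ?_⟩
  rw [SimpleGraph.Walk.support_map] at hw
  obtain ⟨w', hw', rfl⟩ := List.mem_map.1 hw
  exact ⟨w', hp w' hw', rfl⟩

lemma iso_induce_connected (φ : G ≃g G) {S : Set V} (h : (G.induce S).Connected) :
    (G.induce (φ '' S)).Connected := by
  rw [induce_connected_iff_walkIn] at h ⊢
  obtain ⟨⟨x₀, hx₀⟩, hwalk⟩ := h
  refine ⟨⟨φ x₀, x₀, hx₀, rfl⟩, ?_⟩
  rintro x ⟨x₀', hx₀', rfl⟩ y ⟨y₀', hy₀', rfl⟩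
  exact iso_walkIn φ (hwalk x₀' hx₀' y₀' hy₀')

lemma iso_image_compl (φ : G ≃g G) (S : Set V) : φ '' Sᶜ = (φ '' S)ᶜ :=
  Set.image_compl_eq φ.bijective

lemma iso_edgeBoundary (φ : G ≃g G) (S : Set V) :
    edgeBoundary G (φ '' S) = (fun p : V × V => (φ p.1, φ p.2)) '' edgeBoundary G S := by
  ext ⟨a, b⟩
  constructor
  · rintro ⟨hadj, ⟨a₀, ha₀, rfl⟩, hb⟩
    refine ⟨(a₀, φ.symm b), ⟨?_, ha₀, ?_⟩, ?_⟩
    · have : G.Adj (φ a₀) (φ (φ.symm b)) := by simpa using hadj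
      exact φ.map_adj_iff.1 this
    · intro hmem
      exact hb ⟨φ.symm b, hmem, by simp⟩
    · simp
  · rintro ⟨⟨u, v⟩, ⟨hadj, hu, hv⟩, heq⟩
    have h1 : φ u = a := congrArg Prod.fst heq
    have h2 : φ v = b := congrArg Prod.snd heq
    subst h1; subst h2
    refine ⟨φ.map_adj_iff.2 hadj, ⟨u, hu, rfl⟩, ?_⟩
    rintro ⟨w, hw, hww⟩
    exact hv (by rwa [← φ.injective hww])

lemma iso_weight (φ : G ≃g G) (S : Set V) : weight G (φ '' S) = weight G S := by
  unfold weight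
  rw [iso_edgeBoundary]
  exact Set.ncard_image_of_injective _ (fun p q hpq => by
    have h1 := φ.injective (congrArg Prod.fst hpq)
    have h2 := φ.injective (congrArg Prod.snd hpq)
    exact Prod.ext h1 h2)

lemma iso_isCutLe (φ : G ≃g G) {k : ℕ} {S : Set V} (h : IsCutLe G k S) :
    IsCutLe G k (φ '' S) := by
  obtain ⟨⟨h1, h2, h3, h4, h5⟩, h6⟩ := h
  refine ⟨⟨h1.image φ, ?_, iso_induce_connected φ h3, ?_, ?_⟩, ?_⟩
  · rw [← iso_image_compl]
    exact h2.image φ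
  · rw [← iso_image_compl]
    exact iso_induce_connected φ h4
  · rw [iso_edgeBoundary]
    exact h5.image _
  · rw [show weight G (φ '' S) = weight G S from iso_weight φ S]
    exact h6

lemma iso_nbhd (φ : G ≃g G) (hc : G.Connected) (r : ℕ) (S : Set V) :
    nbhd G r (φ '' S) = φ '' nbhd G r S := by
  ext v
  constructor
  · rintro ⟨u, ⟨u₀, hu₀, rfl⟩, hd⟩
    refine ⟨φ.symm v, ⟨u₀, hu₀, ?_⟩, by simp⟩
    have : G.dist (φ (φ.symm v)) (φ u₀) = G.dist (φ.symm v) u₀ := iso_dist φ hc _ _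
    rw [← this]
    simpa using hd
  · rintro ⟨v₀, ⟨u₀, hu₀, hd⟩, rfl⟩
    refine ⟨φ u₀, ⟨u₀, hu₀, rfl⟩, ?_⟩
    rw [iso_dist φ hc]
    exact hd

lemma collar_finite (hc : G.Connected) (hlf : LocallyFiniteGraph G) {X : Set V}
    (hfin : (edgeBoundary G X).Finite) (κ : ℕ) : (nbhd G κ X ∩ Xᶜ).Finite := by
  have hheads : ((fun p : V × V => p.2) '' edgeBoundary G X).Finite := hfin.image _
  have hsub : nbhd G κ X ∩ Xᶜ ⊆
      ⋃ h ∈ (fun p : V × V => p.2) '' edgeBoundary G X, {v : V | G.dist v h ≤ κ} := by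
    rintro z ⟨⟨u, huX, hd⟩, hzX⟩
    obtain ⟨p, hp⟩ := (hc.preconnected z u).exists_walk_length_eq_dist
    obtain ⟨a, b, hab, haX, hbX, hasup, hbsup⟩ :=
      exists_boundary_of_walk p hzX (fun h => h huX)
    have hba : (b, a) ∈ edgeBoundary G X := ⟨hab.symm, Set.not_notMem.1 hbX, haX⟩
    refine Set.mem_biUnion ⟨(b, a), hba, rfl⟩ ?_
    have := dist_le_of_mem_support hasup
    simp only [Set.mem_setOf_eq]
    omega
  exact Set.Finite.subset (hheads.biUnion (fun h _ => ball_finite hlf hc h κ)) hsub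

lemma copt_isCutLe {k : ℕ} (hacc : AccessibleWith G k) {C : Set V} (hC : C ∈ COpt G k) :
    IsCutLe G k C := by
  obtain ⟨α, hα, hopt⟩ := hC
  exact ⟨hopt.1.1.1, weight_le_of_copt hacc hα hopt.1⟩

/-- Uniform bound on diameters of collars of optimal cuts. -/
lemma exists_collar_bound (hc : G.Connected) (hlf : LocallyFiniteGraph G)
    (horb : AutFinOrbits G) {k : ℕ} (hacc : AccessibleWith G k) (κ : ℕ) :
    ∃ ℓ : ℕ, ∀ D ∈ COpt G k, ∀ x ∈ nbhd G κ D ∩ Dᶜ, ∀ y ∈ nbhd G κ D ∩ Dᶜ,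
      G.dist x y ≤ ℓ := by
  classical
  obtain ⟨-, horbE⟩ := horb
  set F : G.edgeSet → Set (Sym2 V) := fun e => Set.range fun φ : G ≃g G => Sym2.map ⇑φ e.1
    with hF
  have hFfin : (Set.range F).Finite := horbE
  haveI : Finite ↥(Set.range F) := hFfin.to_subtype
  have hpick0 : ∀ o : ↥(Set.range F), ∃ e : G.edgeSet, F e = o.1 := fun o => o.2
  choose pick hpick using hpick0
  have hpickfin : (Set.range pick).Finite := Set.finite_range pick
  -- candidate cuts for an edge
  set 𝒦 : Sym2 V → Set (Set V) :=
    fun e₀ => {X : Set V | IsCutLe G k X ∧ ∃ a b : V, s(a, b) = e₀ ∧ a ∈ X ∧ b ∉ X} with h𝒦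
  have h𝒦fin : ∀ e₀ ∈ G.edgeSet, (𝒦 e₀).Finite := by
    intro e₀ he₀
    induction e₀ with
    | _ c d =>
      refine Set.Finite.subset ((cutSep_finite k G hc c d).union (cutSep_finite k G hc d c)) ?_
      rintro X ⟨⟨⟨x1, x2, x3, x4, x5⟩, hw⟩, a, b, hab, haX, hbX⟩
      rw [Sym2.eq_iff] at hab
      rcases hab with ⟨rfl, rfl⟩ | ⟨rfl, rfl⟩
      · exact Or.inl ⟨x3, x4, x5, hw, haX, hbX⟩
      · exact Or.inr ⟨x3, x4, x5, hw, haX, hbX⟩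
  set ℱ : Set (Set V) := ⋃ e ∈ Set.range pick, 𝒦 e.1 with hℱ
  have hℱfin : ℱ.Finite := hpickfin.biUnion (fun e _ => h𝒦fin e.1 e.2)
  -- every optimal cut is an automorphic image of a member of ℱ
  have hcover : ∀ D ∈ COpt G k, ∃ (φ : G ≃g G) (D₀ : Set V), D₀ ∈ ℱ ∧ D = φ '' D₀ := by
    intro D hD
    have hcut := copt_isCut hD
    obtain ⟨x, hx⟩ := hcut.1
    obtain ⟨y, hy⟩ := hcut.2.1
    obtain ⟨p⟩ := hc.preconnected x y
    obtain ⟨a, b, hab, haD, hbD, -, -⟩ := exists_boundary_of_walk p hx hy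
    have hedge : s(a, b) ∈ G.edgeSet := (G.mem_edgeSet).2 hab
    set eE : G.edgeSet := ⟨s(a, b), hedge⟩ with heE
    set o : ↥(Set.range F) := ⟨F eE, Set.mem_range_self eE⟩ with ho
    have hin : eE.1 ∈ F (pick o) := by
      rw [hpick o]
      show eE.1 ∈ F eE
      refine ⟨RelIso.refl _, ?_⟩
      simp [Sym2.map_id]
    obtain ⟨φ, hφ⟩ := hin
    refine ⟨φ, φ.symm '' D, ?_, ?_⟩
    · rw [hℱ]
      refine Set.mem_biUnion (Set.mem_range_self o) ?_
      refine ⟨iso_isCutLe φ.symm (copt_isCutLe hacc hD), ?_⟩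
      -- endpoints of the representative edge are separated
      obtain ⟨⟨c, d⟩, hcd0⟩ := Quot.exists_rep (pick o).1
      have hcd : s(c, d) = (pick o).1 := hcd0
      have hmap : s(φ c, φ d) = s(a, b) := by
        rw [← Sym2.map_pair_eq, hcd]
        exact hφ
      rw [Sym2.eq_iff] at hmap
      rcases hmap with ⟨hca, hdb⟩ | ⟨hcb, hda⟩
      · refine ⟨c, d, hcd, ⟨a, haD, by rw [← hca]; simp⟩, ?_⟩
        rintro ⟨w, hw, hww⟩
        have : w = φ (φ.symm w) := by simp
        have hwd : φ.symm w = d := hww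
        have : w = φ d := by rw [← hwd]; simp
        rw [this, hdb] at hw
        exact hbD hw
      · refine ⟨d, c, by rw [Sym2.eq_swap]; exact hcd, ⟨a, haD, by rw [← hda]; simp⟩, ?_⟩
        rintro ⟨w, hw, hww⟩
        have hwc : φ.symm w = c := hww
        have : w = φ c := by rw [← hwc]; simp
        rw [this, hcb] at hw
        exact hbD hw
    · ext z
      constructor
      · intro hz
        exact ⟨φ.symm z, ⟨z, hz, rfl⟩, by simp⟩
      · rintro ⟨w, ⟨w₀, hw₀, rfl⟩, rfl⟩
        simpa using hw₀
  -- collars of members of ℱ are finite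
  have hcolfin : ∀ X ∈ ℱ, (nbhd G κ X ∩ Xᶜ).Finite := by
    intro X hX
    rw [hℱ] at hX
    obtain ⟨e, -, hXe⟩ := Set.mem_iUnion₂.1 hX
    exact collar_finite hc hlf hXe.1.1.2.2.2.2 κ
  set Pp : Set (V × V) := ⋃ X ∈ ℱ, (nbhd G κ X ∩ Xᶜ) ×ˢ (nbhd G κ X ∩ Xᶜ) with hPp
  have hPpfin : Pp.Finite := hℱfin.biUnion (fun X hX => (hcolfin X hX).prod (hcolfin X hX))
  refine ⟨hPpfin.toFinset.sup (fun p => G.dist p.1 p.2), ?_⟩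
  intro D hD x hx y hy
  obtain ⟨φ, D₀, hD₀ℱ, rfl⟩ := hcover D hD
  have hcol : nbhd G κ (φ '' D₀) ∩ (φ '' D₀)ᶜ = φ '' (nbhd G κ D₀ ∩ D₀ᶜ) := by
    rw [iso_nbhd φ hc, ← iso_image_compl, ← Set.image_inter φ.injective]
  rw [hcol] at hx hy
  obtain ⟨x₀, hx₀, rfl⟩ := hx
  obtain ⟨y₀, hy₀, rfl⟩ := hy
  rw [iso_dist φ hc]
  have hmem : ((x₀, y₀) : V × V) ∈ hPpfin.toFinset := by
    rw [Set.Finite.mem_toFinset]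
    exact Set.mem_biUnion hD₀ℱ (Set.mk_mem_prod hx₀ hy₀)
  exact Finset.le_sup (f := fun p : V × V => G.dist p.1 p.2) (b := (x₀, y₀)) hmem

end Equivariance

end CFGroups

open CFGroups Pointwise in
/-- Blocks are connected, and there is `ℓ ∈ ℕ` such that for every optimal
cut `C` and every `S ⊆ B[C]`: any two vertices of `B[C] \ N^ℓS` that can be joined by a
path in `Γ − N^ℓS` can be joined by a path in `B[C] \ S`. -/
theorem blocks_connected_and_uniform_separation
    {V : Type u} (G : SimpleGraph V) (hconn : G.Connected)
    (hlf : CFGroups.LocallyFiniteGraph G)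
    (k : ℕ) (hacc : CFGroups.AccessibleWith G k)
    (horb : CFGroups.AutFinOrbits G)
    (κ : ℕ) (hκ1 : 1 ≤ κ)
    (hκ : ∀ C ∈ CFGroups.COpt G k,
      (G.induce (CFGroups.nbhd G κ C ∩ Cᶜ)).Connected) :
    (∀ C ∈ CFGroups.COpt G k, (G.induce (CFGroups.block G k κ C)).Connected) ∧
    ∃ ℓ : ℕ, ∀ C ∈ CFGroups.COpt G k, ∀ S ⊆ CFGroups.block G k κ C, ∀ u v : V,
      u ∈ CFGroups.block G k κ C \ CFGroups.nbhd G ℓ S →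
      v ∈ CFGroups.block G k κ C \ CFGroups.nbhd G ℓ S →
      (∃ p : G.Walk u v, ∀ w ∈ p.support, w ∉ CFGroups.nbhd G ℓ S) →
      ∃ q : G.Walk u v, ∀ w ∈ q.support, w ∈ CFGroups.block G k κ C \ S := by
  classical
  constructor
  · -- blocks are connected
    intro C hC
    rw [CFGroups.induce_connected_iff_walkIn]
    have hclsC := CFGroups.mem_cls_self hC
    have hcol : CFGroups.nbhd G κ C ∩ Cᶜ ⊆ CFGroups.block G k κ C :=
      CFGroups.collar_subset_block hconn hacc hC hclsC
    obtain ⟨⟨z, hz⟩, -⟩ := CFGroups.induce_connected_iff_walkIn.1 (hκ C hC)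
    refine ⟨⟨z, hcol hz⟩, ?_⟩
    intro u hu v hv
    obtain ⟨p⟩ := hconn.preconnected u v
    have Hdiam : ∀ D ∈ CFGroups.cls G k C, ∀ z ∈ CFGroups.nbhd G κ D ∩ Dᶜ,
        ∀ s ∈ (∅ : Set V), s ∈ CFGroups.nbhd G κ D ∩ Dᶜ → G.dist z s ≤ 0 := by
      intro D hD z' hz' s hs
      exact absurd hs (Set.notMem_empty s)
    have hres := CFGroups.reroute hconn hκ1 hacc hC (fun D hD => hκ D hD) ∅ 0 Hdiam
      (((Finset.range (p.length + 1)).filter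
        (fun t => p.getVert t ∉ CFGroups.block G k κ C)).card)
      p.length p.getVert (fun t ht => p.adj_getVert_succ ht)
      (fun t _ => Or.inl (by rw [CFGroups.nbhd_empty]; exact Set.notMem_empty _))
      (by rw [SimpleGraph.Walk.getVert_zero]; exact hu)
      (by rw [SimpleGraph.Walk.getVert_length]; exact hv)
      le_rfl
    rw [SimpleGraph.Walk.getVert_zero, SimpleGraph.Walk.getVert_length, Set.diff_empty] at hres
    exact hres
  · -- uniform separation
    obtain ⟨ℓ, hℓ⟩ := CFGroups.exists_collar_bound hconn hlf horb hacc κ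
    refine ⟨ℓ, ?_⟩
    rintro C hC S hS u v hu hv ⟨p, hp⟩
    have Hdiam : ∀ D ∈ CFGroups.cls G k C, ∀ z ∈ CFGroups.nbhd G κ D ∩ Dᶜ, ∀ s ∈ S,
        s ∈ CFGroups.nbhd G κ D ∩ Dᶜ → G.dist z s ≤ ℓ :=
      fun D hD z hz s _ hs => hℓ D (CFGroups.cls_subset_copt hD) z hz s hs
    have hres := CFGroups.reroute hconn hκ1 hacc hC (fun D hD => hκ D hD) S ℓ Hdiam
      (((Finset.range (p.length + 1)).filter
        (fun t => p.getVert t ∉ CFGroups.block G k κ C)).card)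
      p.length p.getVert (fun t ht => p.adj_getVert_succ ht)
      (fun t _ => Or.inl (hp _ (CFGroups.getVert_mem_support' p t)))
      (by rw [SimpleGraph.Walk.getVert_zero]; exact hu.1)
      (by rw [SimpleGraph.Walk.getVert_length]; exact hv.1)
      le_rfl
    rw [SimpleGraph.Walk.getVert_zero, SimpleGraph.Walk.getVert_length] at hres
    exact hres
end

section
/- Let Γ be a connected graph of finite treewidth and uniformly bounded vertex degree. Then there exists k ∈ ℕ such that: for every one-sided infinite simple path γ in Γ, every vertex v₀ ∈ V(Γ), and every n ∈ ℕ, there is a k-cut D with v₀ ∈ D, d(v₀, D*) ≥ n, and |D* ∩ γ| = ∞. -/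
open Pointwise

universe u

namespace SepRayAux

open SimpleGraph

variable {V : Type u} {G : SimpleGraph V}

/-- Reachability inside a vertex set `S`. -/
def GReach (G : SimpleGraph V) (S : Set V) (a b : V) : Prop :=
  ∃ p : G.Walk a b, ∀ x ∈ p.support, x ∈ S

lemma GReach.refl {S : Set V} {a : V} (ha : a ∈ S) : GReach G S a a :=
  ⟨Walk.nil, by simpa using ha⟩

lemma GReach.mem_left {S : Set V} {a b : V} (h : GReach G S a b) : a ∈ S :=
  h.choose_spec a h.choose.start_mem_support

lemma GReach.mem_right {S : Set V} {a b : V} (h : GReach G S a b) : b ∈ S :=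
  h.choose_spec b h.choose.end_mem_support

lemma GReach.symm {S : Set V} {a b : V} (h : GReach G S a b) : GReach G S b a := by
  obtain ⟨p, hp⟩ := h
  exact ⟨p.reverse, fun x hx => hp x (by rwa [Walk.support_reverse, List.mem_reverse] at hx)⟩

lemma GReach.trans {S : Set V} {a b c : V} (h1 : GReach G S a b) (h2 : GReach G S b c) :
    GReach G S a c := by
  obtain ⟨p, hp⟩ := h1; obtain ⟨q, hq⟩ := h2
  refine ⟨p.append q, fun x hx => ?_⟩
  rw [Walk.mem_support_append_iff] at hx
  exact hx.elim (hp x) (hq x)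

lemma GReach.adjExt {S : Set V} {a b c : V} (h : GReach G S a b) (hadj : G.Adj b c)
    (hc : c ∈ S) : GReach G S a c := by
  refine h.trans ⟨Walk.cons hadj Walk.nil, ?_⟩
  intro x hx
  simp only [Walk.support_cons, Walk.support_nil, List.mem_cons, List.mem_singleton] at hx
  rcases hx with rfl | rfl | h'
  · exact h.mem_right
  · exact hc
  · exact absurd h' (by simp)

lemma GReach.consExt {S : Set V} {a b c : V} (hadj : G.Adj a b) (ha : a ∈ S)
    (h : GReach G S b c) : GReach G S a c := by
  obtain ⟨p, hp⟩ := h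
  refine ⟨Walk.cons hadj p, fun x hx => ?_⟩
  rw [Walk.support_cons] at hx
  rcases List.mem_cons.mp hx with rfl | hx
  · exact ha
  · exact hp x hx

lemma GReach.strengthen {S S' : Set V} {a b : V} (h : GReach G S a b)
    (hS' : ∀ z, GReach G S a z → z ∈ S') : GReach G S' a b := by
  classical
  obtain ⟨p, hp⟩ := h
  refine ⟨p, fun x hx => hS' x ⟨p.takeUntil x hx, fun y hy => hp y ?_⟩⟩
  exact p.support_takeUntil_subset hx hy

lemma greach_cross {C : Set V} :
    ∀ {x c : V} (p : G.Walk x c), x ∉ C → c ∈ C →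
      ∃ y z, G.Adj y z ∧ z ∈ C ∧ GReach G Cᶜ x y := by
  intro x c p
  induction p with
  | nil => intro hx hc; exact absurd hc hx
  | @cons u v w h q ih =>
    intro hx hc
    by_cases hv : v ∈ C
    · exact ⟨u, v, h, hv, GReach.refl hx⟩
    · obtain ⟨y, z, hyz, hzC, hr⟩ := ih hv hc
      exact ⟨y, z, hyz, hzC, hr.consExt h hx⟩

lemma induce_connected_of_greach {S : Set V} {a : V} (ha : a ∈ S)
    (h : ∀ x ∈ S, GReach G S a x) : (G.induce S).Connected := by
  rw [connected_iff]
  have key : ∀ (x y : V) (p : G.Walk x y), (∀ z ∈ p.support, z ∈ S) →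
      ∀ (hx : x ∈ S) (hy : y ∈ S), (G.induce S).Reachable ⟨x, hx⟩ ⟨y, hy⟩ := by
    intro x y p
    induction p with
    | nil => intro _ hx hy; exact Reachable.refl _
    | @cons u v w hadj q ih =>
      intro hp hx hy
      have hv : v ∈ S := hp v (by rw [Walk.support_cons]; exact List.mem_cons_of_mem _ q.start_mem_support)
      have h1 : (G.induce S).Adj ⟨u, hx⟩ ⟨v, hv⟩ := by
        simpa using hadj
      exact h1.reachable.trans (ih (fun z hz => hp z (by rw [Walk.support_cons]; exact List.mem_cons_of_mem _ hz)) hv hy)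
  refine ⟨?_, ⟨⟨a, ha⟩⟩⟩
  rintro ⟨x, hx⟩ ⟨y, hy⟩
  obtain ⟨p, hp⟩ := h x hx
  obtain ⟨q, hq⟩ := h y hy
  exact (key a x p hp ha hx).symm.trans (key a y q hq ha hy)

lemma ball_walk_finite (hlf : ∀ v : V, (G.neighborSet v).Finite) (v₀ : V) :
    ∀ m : ℕ, {u : V | ∃ p : G.Walk u v₀, p.length ≤ m}.Finite := by
  intro m
  induction m with
  | zero =>
    refine Set.Finite.subset (Set.finite_singleton v₀) ?_
    rintro u ⟨p, hp⟩
    cases p with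
    | nil => rfl
    | cons h q => simp [Walk.length_cons] at hp
  | succ m ih =>
    refine Set.Finite.subset (ih.union (Set.Finite.biUnion ih (fun x _ => hlf x))) ?_
    rintro u ⟨p, hp⟩
    cases p with
    | nil => exact Or.inl ⟨Walk.nil, Nat.zero_le _⟩
    | @cons u v w h q =>
      rw [Walk.length_cons] at hp
      have hv : v ∈ {u : V | ∃ p : G.Walk u v₀, p.length ≤ m} := ⟨q, by omega⟩
      exact Or.inr (Set.mem_biUnion hv (by exact h.symm))

section Tree

variable {T : Type u} {tr : SimpleGraph T}

/-- A canonical path between two vertices of a connected graph. -/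
noncomputable def tpath (hpc : tr.Preconnected) (x y : T) : tr.Walk x y :=
  letI := Classical.decEq T
  (hpc x y).some.bypass

lemma tpath_isPath (hpc : tr.Preconnected) (x y : T) : (tpath hpc x y).IsPath := by
  classical
  unfold tpath
  exact Walk.bypass_isPath _

lemma eq_tpath (hpc : tr.Preconnected) (hac : tr.IsAcyclic) {x y : T} {p : tr.Walk x y}
    (hp : p.IsPath) : p = tpath hpc x y :=
  congrArg Subtype.val (hac.path_unique ⟨p, hp⟩ ⟨tpath hpc x y, tpath_isPath hpc x y⟩)

lemma mem_tpath_symm (hpc : tr.Preconnected) (hac : tr.IsAcyclic) {x y z : T}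
    (hz : z ∈ (tpath hpc x y).support) : z ∈ (tpath hpc y x).support := by
  have h1 : (tpath hpc x y).reverse = tpath hpc y x :=
    eq_tpath hpc hac (tpath_isPath hpc x y).reverse
  rw [← h1, Walk.support_reverse, List.mem_reverse]; exact hz

lemma tpath_prefix (hpc : tr.Preconnected) (hac : tr.IsAcyclic) {x y z : T}
    (hz : z ∈ (tpath hpc x y).support) :
    ∀ w ∈ (tpath hpc x z).support, w ∈ (tpath hpc x y).support := by
  classical
  have h1 : (tpath hpc x y).takeUntil z hz = tpath hpc x z :=
    eq_tpath hpc hac ((tpath_isPath hpc x y).takeUntil hz)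
  intro w hw
  rw [← h1] at hw
  exact (tpath hpc x y).support_takeUntil_subset hz hw

lemma tpath_triangle (hpc : tr.Preconnected) (hac : tr.IsAcyclic) {x z : T} (y : T)
    {w : T} (hw : w ∈ (tpath hpc x z).support) :
    w ∈ (tpath hpc x y).support ∨ w ∈ (tpath hpc y z).support := by
  classical
  have h1 : ((tpath hpc x y).append (tpath hpc y z)).bypass = tpath hpc x z :=
    eq_tpath hpc hac (Walk.bypass_isPath _)
  rw [← h1] at hw
  have h2 := Walk.support_bypass_subset _ hw
  rw [Walk.mem_support_append_iff] at h2
  exact h2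

lemma tpath_support_subset (hpc : tr.Preconnected) (hac : tr.IsAcyclic) {S : Set T}
    (hS : (tr.induce S).Connected) {x y : T} (hx : x ∈ S) (hy : y ∈ S) :
    ∀ w ∈ (tpath hpc x y).support, w ∈ S := by
  classical
  obtain ⟨q⟩ := hS.preconnected ⟨x, hx⟩ ⟨y, hy⟩
  let p : tr.Walk x y := q.map (SimpleGraph.Embedding.induce S).toHom
  have hps : ∀ w ∈ p.support, w ∈ S := by
    intro w hw
    rw [show p.support = _ from Walk.support_map _ _] at hw
    obtain ⟨⟨w', hw'⟩, _, rfl⟩ := List.mem_map.mp hw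
    exact hw'
  have h1 : p.bypass = tpath hpc x y := eq_tpath hpc hac (Walk.bypass_isPath _)
  intro w hw
  rw [← h1] at hw
  exact hps w (Walk.support_bypass_subset _ hw)

lemma tpath_adj_support (hpc : tr.Preconnected) (hac : tr.IsAcyclic) {x y : T}
    (h : tr.Adj x y) : ∀ w ∈ (tpath hpc x y).support, w = x ∨ w = y := by
  have h1 : Walk.cons h Walk.nil = tpath hpc x y := by
    refine eq_tpath hpc hac ?_
    rw [Walk.isPath_def]
    simp [h.ne]
  intro w hw
  rw [← h1] at hw
  simpa using hw

lemma exists_cross {K : Set T} :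
    ∀ {s r : T} (p : tr.Walk s r), s ∈ K → r ∉ K →
      ∃ a b, tr.Adj a b ∧ a ∈ K ∧ b ∉ K ∧ a ∈ p.support ∧ b ∈ p.support := by
  intro s r p
  induction p with
  | nil => intro hs hr; exact absurd hs hr
  | @cons u v w h q ih =>
    intro hs hr
    by_cases hv : v ∈ K
    · obtain ⟨a, b, h1, h2, h3, h4, h5⟩ := ih hv hr
      exact ⟨a, b, h1, h2, h3,
        by rw [Walk.support_cons]; exact List.mem_cons_of_mem _ h4,
        by rw [Walk.support_cons]; exact List.mem_cons_of_mem _ h5⟩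
    · exact ⟨u, v, h, hs, hv, (Walk.cons h q).start_mem_support,
        by rw [Walk.support_cons]; exact List.mem_cons_of_mem _ q.start_mem_support⟩

end Tree

end SepRayAux


open CFGroups Pointwise in
/-- In a connected graph of finite treewidth and uniformly bounded degree
there is `k ∈ ℕ` such that for every one-sided infinite simple path `γ`, every vertex `v₀`
and every `n` there is a `k`-cut `D` with `v₀ ∈ D`, `d(v₀, D*) ≥ n` and `|D* ∩ γ| = ∞`. -/
theorem separation_of_rays
    {V : Type u} (G : SimpleGraph V) (hconn : G.Connected)
    (htw : CFGroups.FiniteTreewidth G) (hdeg : CFGroups.UnifBoundedDegree G) :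
    ∃ k : ℕ, ∀ γ : ℕ → V, CFGroups.IsRayPath G γ → ∀ v₀ : V, ∀ n : ℕ,
      ∃ D : Set V, CFGroups.IsCutLe G k D ∧ v₀ ∈ D ∧
        (∀ u ∈ Dᶜ, n ≤ G.dist v₀ u) ∧ (Set.range γ ∩ Dᶜ).Infinite := by
  classical
  open SimpleGraph SepRayAux in
  obtain ⟨w, T, tr, X, hdec, hbags⟩ := htw
  obtain ⟨d, hdeg'⟩ := hdeg
  obtain ⟨htree, hcover, hedge, hsubt⟩ := hdec
  have hpc : tr.Preconnected := htree.isConnected.preconnected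
  have hac : tr.IsAcyclic := htree.IsAcyclic
  refine ⟨(w + 1) * d, ?_⟩
  intro γ hγ v₀ n
  obtain ⟨hγinj, hγadj⟩ := hγ
  set τ : V → T := fun v => (hcover v).choose with hτdef
  have hτmem : ∀ v, v ∈ X (τ v) := fun v => (hcover v).choose_spec
  -- the ball `B`
  set B : Set V := {u | G.dist v₀ u < n} ∪ {v₀} with hBdef
  have hv₀B : v₀ ∈ B := Or.inr rfl
  have hBfin : B.Finite := by
    refine Set.Finite.subset ((ball_walk_finite (fun v => (hdeg' v).1) v₀ n).union
      (Set.finite_singleton v₀)) ?_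
    rintro u (hu | hu)
    · have hud : G.dist v₀ u < n := hu
      obtain ⟨p, hp⟩ := hconn.exists_walk_length_eq_dist v₀ u
      exact Or.inl ⟨p.reverse, by rw [Walk.length_reverse]; omega⟩
    · exact Or.inr hu
  have hBreach : ∀ u ∈ B, GReach G B v₀ u := by
    rintro u (hu | rfl)
    · have hud : G.dist v₀ u < n := hu
      obtain ⟨p, hp⟩ := hconn.exists_walk_length_eq_dist v₀ u
      refine ⟨p, fun x hx => Or.inl ?_⟩
      have h1 : G.dist v₀ x ≤ (p.takeUntil x hx).length := SimpleGraph.dist_le _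
      have h2 : (p.takeUntil x hx).length ≤ p.length := p.length_takeUntil_le hx
      simp only [Set.mem_setOf_eq]
      omega
    · exact GReach.refl hv₀B
  -- the hull `H` of the bags chosen for `B`
  set f₀ : T := τ v₀ with hf₀def
  set H : Set T := ⋃ b ∈ B, {t | t ∈ (tpath hpc f₀ (τ b)).support} with hHdef
  have hHfin : H.Finite := hBfin.biUnion (fun b _ => List.finite_toSet _)
  have hτbH : ∀ b ∈ B, τ b ∈ H := fun b hb => Set.mem_biUnion hb (Walk.end_mem_support _)
  have hf₀H : f₀ ∈ H := Set.mem_biUnion hv₀B (Walk.start_mem_support _)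
  have hH1 : ∀ x ∈ H, ∀ z ∈ (tpath hpc f₀ x).support, z ∈ H := by
    intro x hx z hz
    rw [hHdef] at hx
    rw [Set.mem_iUnion₂] at hx
    obtain ⟨b, hb, hxb⟩ := hx
    exact Set.mem_biUnion hb (tpath_prefix hpc hac hxb z hz)
  have hHconv : ∀ x ∈ H, ∀ y ∈ H, ∀ z ∈ (tpath hpc x y).support, z ∈ H := by
    intro x hx y hy z hz
    rcases tpath_triangle hpc hac f₀ hz with h | h
    · exact hH1 x hx z (mem_tpath_symm hpc hac h)
    · exact hH1 y hy z h
  -- the finite set `Y` of vertices in hull bags, and the escape index `i₀`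
  set Y : Set V := ⋃ t ∈ H, X t with hYdef
  have hYfin : Y.Finite := hHfin.biUnion (fun t _ => (hbags t).1)
  obtain ⟨i₀, hi₀⟩ : ∃ i₀ : ℕ, ∀ i, i₀ ≤ i → γ i ∉ Y := by
    have hpre : (γ ⁻¹' Y).Finite := hYfin.preimage (Set.injOn_of_injective hγinj)
    obtain ⟨N, hN⟩ := hpre.bddAbove
    exact ⟨N + 1, fun i hi hmem => absurd (hN hmem) (by omega)⟩
  have hbagH : ∀ v : V, v ∉ Y → ∀ t, v ∈ X t → t ∉ H :=
    fun v hv t ht hH' => hv (Set.mem_biUnion hH' ht)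
  -- the branch `K`
  set t₁ : T := τ (γ i₀) with ht₁def
  set K : Set T := {t | ∀ s ∈ (tpath hpc t₁ t).support, s ∉ H} with hKdef
  have hKH : ∀ t ∈ K, t ∉ H := fun t ht => ht t (Walk.end_mem_support _)
  have hγi₀Y : γ i₀ ∉ Y := hi₀ i₀ le_rfl
  have ht₁K : t₁ ∈ K := by
    intro s hs
    have hnil : (Walk.nil : tr.Walk t₁ t₁) = tpath hpc t₁ t₁ :=
      eq_tpath hpc hac Walk.IsPath.nil
    rw [← hnil] at hs
    simp only [Walk.support_nil, List.mem_singleton] at hs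
    subst hs
    exact hbagH (γ i₀) hγi₀Y t₁ (hτmem (γ i₀))
  have hKclose : ∀ s ∈ K, ∀ t, (∀ z ∈ (tpath hpc s t).support, z ∉ H) → t ∈ K := by
    intro s hs t hst z hz
    rcases tpath_triangle hpc hac s hz with h | h
    · exact hs z h
    · exact hst z h
  have hbagsK : ∀ v : V, v ∉ Y → (∃ t ∈ K, v ∈ X t) → ∀ t, v ∈ X t → t ∈ K := by
    rintro v hv ⟨t0, ht0K, hvt0⟩ t hvt
    refine hKclose t0 ht0K t (fun z hz => ?_)
    have hzX : v ∈ X z := tpath_support_subset hpc hac (hsubt v) hvt0 hvt z hz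
    exact hbagH v hv z hzX
  have htailK : ∀ i, i₀ ≤ i → ∀ t, γ i ∈ X t → t ∈ K := by
    intro i hi
    induction i, hi using Nat.le_induction with
    | base => exact hbagsK (γ i₀) hγi₀Y ⟨t₁, ht₁K, hτmem (γ i₀)⟩
    | succ i hi ih =>
      obtain ⟨s₀, hs₀⟩ := hedge (γ i) (γ (i + 1)) (hγadj i)
      exact hbagsK (γ (i + 1)) (hi₀ (i + 1) (by omega)) ⟨s₀, ih s₀ hs₀.1, hs₀.2⟩
  -- the separating set `A`
  set A : Set V := {v | ∃ t, t ∉ K ∧ v ∈ X t} with hAdef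
  have hBA : ∀ b ∈ B, b ∈ A :=
    fun b hb => ⟨τ b, fun hK => hKH _ hK (hτbH b hb), hτmem b⟩
  have hγtailA : ∀ i, i₀ ≤ i → γ i ∉ A := by
    rintro i hi ⟨t, htK, hmem⟩
    exact htK (htailK i hi t hmem)
  -- the unique exit edge `(a, b)` of `K`
  have hf₀K : f₀ ∉ K := fun h => hKH f₀ h hf₀H
  obtain ⟨a, b, hab, haK, hbK, -, -⟩ := exists_cross (tpath hpc t₁ f₀) ht₁K hf₀K
  have hKpath : ∀ a' ∈ K, ∀ a'' ∈ K, ∀ z ∈ (tpath hpc a' a'').support, z ∉ H := by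
    intro a' ha' a'' ha'' z hz
    rcases tpath_triangle hpc hac t₁ hz with h | h
    · exact ha' z (mem_tpath_symm hpc hac h)
    · exact ha'' z h
  have hbH : ∀ a' b', tr.Adj a' b' → a' ∈ K → b' ∉ K → b' ∈ H := by
    intro a' b' hadj ha' hb'
    have hb'2 : ∃ z ∈ (tpath hpc t₁ b').support, z ∈ H := by
      by_contra hcon
      push_neg at hcon
      exact hb' (fun s hs => hcon s hs)
    obtain ⟨z, hz, hzH⟩ := hb'2
    rcases tpath_triangle hpc hac a' hz with h | h
    · exact absurd hzH (ha' z h)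
    · rcases tpath_adj_support hpc hac hadj z h with h1 | h1
      · rw [h1] at hzH; exact absurd hzH (hKH a' ha')
      · rw [h1] at hzH; exact hzH
  have huniq : ∀ a' b', tr.Adj a' b' → a' ∈ K → b' ∉ K → a' = a ∧ b' = b := by
    intro a' b' hadj ha'K hb'K
    have hb'H : b' ∈ H := hbH a' b' hadj ha'K hb'K
    have hbHm : b ∈ H := hbH a b hab haK hbK
    have ha'H : a' ∉ H := hKH a' ha'K
    have haH : a ∉ H := hKH a haK
    by_cases hbb : b' = b
    · subst hbb
      refine ⟨?_, rfl⟩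
      -- two paths from b' to a'
      have hw2path : (Walk.cons hab.symm (tpath hpc a a')).IsPath := by
        rw [SimpleGraph.Walk.cons_isPath_iff]
        exact ⟨tpath_isPath hpc a a', fun hmem => hKpath a haK a' ha'K b' hmem hbHm⟩
      have hw1path : (Walk.cons hadj.symm (Walk.nil : tr.Walk a' a')).IsPath := by
        rw [SimpleGraph.Walk.cons_isPath_iff]
        refine ⟨Walk.IsPath.nil, ?_⟩
        simp only [Walk.support_nil, List.mem_singleton]
        intro h; exact ha'H (h ▸ hb'H)
      have hw12 : Walk.cons hadj.symm (Walk.nil : tr.Walk a' a') =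
          Walk.cons hab.symm (tpath hpc a a') :=
        (eq_tpath hpc hac hw1path).trans (eq_tpath hpc hac hw2path).symm
      have hmem : a ∈ (Walk.cons hadj.symm (Walk.nil : tr.Walk a' a')).support := by
        rw [hw12, Walk.support_cons]
        exact List.mem_cons_of_mem _ (Walk.start_mem_support _)
      simp only [Walk.support_cons, Walk.support_nil, List.mem_cons,
        List.mem_singleton] at hmem
      rcases hmem with h | h | h
      · exact absurd hbHm (h ▸ haH)
      · exact h.symm
      · exact absurd h (by simp)
    · exfalso
      -- the walk b — a — ⋯ — a' — b' would be a second path from b to b'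
      have hsupAvoid : ∀ z ∈ (tpath hpc a a').support, z ∉ H := hKpath a haK a' ha'K
      set q : tr.Walk a b' := (tpath hpc a a').append (Walk.cons hadj Walk.nil) with hqdef
      have hqsup : q.support = (tpath hpc a a').support ++ [b'] := by
        rw [hqdef, Walk.support_append, Walk.support_cons, Walk.support_nil]
        rfl
      have hqpath : q.IsPath := by
        rw [Walk.isPath_def, hqsup]
        rw [List.nodup_append]
        refine ⟨(tpath_isPath hpc a a').support_nodup, List.nodup_singleton _, ?_⟩
        intro z hz
        simp only [List.mem_singleton]
        rintro _ rfl hzb'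
        exact hsupAvoid z hz (hzb' ▸ hb'H)
      have hw2path : (Walk.cons hab.symm q).IsPath := by
        rw [SimpleGraph.Walk.cons_isPath_iff]
        refine ⟨hqpath, ?_⟩
        rw [hqsup, List.mem_append, List.mem_singleton]
        rintro (h | h)
        · exact hsupAvoid b h hbHm
        · exact hbb h.symm
      have hw2eq : Walk.cons hab.symm q = tpath hpc b b' := eq_tpath hpc hac hw2path
      have haH2 : a ∈ H := by
        refine hHconv b hbHm b' hb'H a ?_
        rw [← hw2eq, Walk.support_cons]
        refine List.mem_cons_of_mem _ ?_
        rw [hqsup, List.mem_append]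
        exact Or.inl (Walk.start_mem_support _)
      exact haH haH2
  -- every boundary edge of `A` has its first endpoint in the bag `X a`
  have hbdA : ∀ p ∈ CFGroups.edgeBoundary G A, p.1 ∈ X a := by
    rintro ⟨u, v⟩ ⟨hadj_uv, huA, hvA⟩
    obtain ⟨r', hr'K, hur'⟩ := huA
    obtain ⟨r₀, hur₀, hvr₀⟩ := hedge u v hadj_uv
    have hr₀K : r₀ ∈ K := by
      by_contra h
      exact hvA ⟨r₀, h, hvr₀⟩
    have hsup : ∀ z ∈ (tpath hpc r₀ r').support, u ∈ X z :=
      tpath_support_subset hpc hac (hsubt u) hur₀ hur'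
    obtain ⟨a'', b'', hadj'', ha''K, hb''K, ha''sup, -⟩ :=
      exists_cross (tpath hpc r₀ r') hr₀K hr'K
    have := (huniq a'' b'' hadj'' ha''K hb''K).1
    exact this ▸ hsup a'' ha''sup
  -- a finite superset of the boundary of `A`
  set XaF : Finset V := (hbags a).1.toFinset with hXaFdef
  set F : Finset (V × V) :=
    XaF.biUnion (fun x => ((hdeg' x).1.toFinset).image (fun y => (x, y))) with hFdef
  have hsubF : CFGroups.edgeBoundary G A ⊆ ↑F := by
    rintro ⟨u, v⟩ hp
    have h1 : u ∈ X a := hbdA _ hp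
    have h2 : G.Adj u v := hp.1
    rw [Finset.mem_coe, hFdef, Finset.mem_biUnion]
    refine ⟨u, by rw [hXaFdef, Set.Finite.mem_toFinset]; exact h1, ?_⟩
    rw [Finset.mem_image]
    exact ⟨v, by rw [Set.Finite.mem_toFinset]; exact h2, rfl⟩
  have hcardF : F.card ≤ (w + 1) * d := by
    calc F.card ≤ ∑ x ∈ XaF, (((hdeg' x).1.toFinset).image (fun y => (x, y))).card :=
          Finset.card_biUnion_le
      _ ≤ ∑ _x ∈ XaF, d := by
          refine Finset.sum_le_sum (fun x _ => ?_)
          refine le_trans Finset.card_image_le ?_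
          rw [← Set.ncard_eq_toFinset_card _ (hdeg' x).1]
          exact (hdeg' x).2
      _ = XaF.card * d := by rw [Finset.sum_const, smul_eq_mul]
      _ ≤ (w + 1) * d := by
          refine Nat.mul_le_mul_right d ?_
          rw [hXaFdef, ← Set.ncard_eq_toFinset_card _ (hbags a).1]
          exact (hbags a).2
  -- the component `C` of the tail of `γ` in `Aᶜ`
  have hγi₀A : γ i₀ ∉ A := hγtailA i₀ le_rfl
  set C : Set V := {x | GReach G Aᶜ (γ i₀) x} with hCdef
  have hCA : C ⊆ Aᶜ := fun x hx => GReach.mem_right hx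
  have htailC : ∀ i, i₀ ≤ i → γ i ∈ C := by
    intro i hi
    induction i, hi using Nat.le_induction with
    | base => exact GReach.refl hγi₀A
    | succ i hi ih => exact ih.adjExt (hγadj i) (hγtailA (i + 1) (by omega))
  have hCC : ∀ x ∈ C, GReach G C (γ i₀) x := by
    intro x hx
    exact hx.strengthen (fun z hz => hz)
  -- the component `E` of `v₀` in `Cᶜ`; this is the desired cut
  have hAC : ∀ x ∈ A, x ∈ Cᶜ := fun x hx hxC => (hCA hxC) hx
  have hv₀C : v₀ ∈ Cᶜ := hAC v₀ (hBA v₀ hv₀B)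
  set E : Set V := {x | GReach G Cᶜ v₀ x} with hEdef
  have hv₀E : v₀ ∈ E := GReach.refl hv₀C
  have hEC : E ⊆ Cᶜ := fun x hx => GReach.mem_right hx
  have hCEc : C ⊆ Eᶜ := fun x hx hxE => (hEC hxE) hx
  have hBE : ∀ u ∈ B, u ∈ E := by
    intro u hu
    exact (hBreach u hu).strengthen (fun z hz => hAC z (hBA z hz.mem_right))
  have hEE : ∀ x ∈ E, GReach G E v₀ x := fun x hx => hx.strengthen (fun z hz => hz)
  have hγi₀Ec : γ i₀ ∈ Eᶜ := hCEc (htailC i₀ le_rfl)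
  have hCreach : ∀ z ∈ C, GReach G Eᶜ (γ i₀) z :=
    fun z hz => (hCC z hz).strengthen (fun y hy => hCEc hy.mem_right)
  have hEcreach : ∀ x ∈ Eᶜ, GReach G Eᶜ (γ i₀) x := by
    intro x hx
    by_cases hxC : x ∈ C
    · exact hCreach x hxC
    · obtain ⟨p⟩ := hconn x (γ i₀)
      obtain ⟨y, z, hyz, hzC, hr⟩ := greach_cross p hxC (htailC i₀ le_rfl)
      have hstr : GReach G Eᶜ x y := by
        refine hr.strengthen (fun u hu => ?_)
        intro huE
        exact hx ((show GReach G Cᶜ v₀ u from huE).trans hu.symm)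
      have hxz : GReach G Eᶜ x z := hstr.adjExt hyz (hCEc hzC)
      exact (hCreach z hzC).trans hxz.symm
  -- the boundary of `E` is contained in the boundary of `A`
  have hbdEA : CFGroups.edgeBoundary G E ⊆ CFGroups.edgeBoundary G A := by
    rintro ⟨u, v⟩ ⟨hadj_uv, huE, hvE⟩
    have hvC : v ∈ C := by
      by_contra hvC
      exact hvE ((show GReach G Cᶜ v₀ u from huE).adjExt hadj_uv hvC)
    have huA : u ∈ A := by
      by_contra huA
      exact (hEC huE) ((show GReach G Aᶜ (γ i₀) v from hvC).adjExt hadj_uv.symm huA)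
    exact ⟨hadj_uv, huA, fun hvA => (hCA hvC) hvA⟩
  have hbdEF : CFGroups.edgeBoundary G E ⊆ ↑F := fun p hp => hsubF (hbdEA hp)
  have hbdEfin : (CFGroups.edgeBoundary G E).Finite := Set.Finite.subset F.finite_toSet hbdEF
  refine ⟨E, ⟨⟨⟨v₀, hv₀E⟩, ⟨γ i₀, hγi₀Ec⟩, ?_, ?_, hbdEfin⟩, ?_⟩, hv₀E, ?_, ?_⟩
  · exact induce_connected_of_greach hv₀E hEE
  · refine induce_connected_of_greach hγi₀Ec (fun x hx => ?_)
    exact (hEcreach x hx).strengthen (fun z hz => hz.mem_right)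
  · calc (CFGroups.edgeBoundary G E).ncard ≤ (↑F : Set (V × V)).ncard :=
          Set.ncard_le_ncard hbdEF F.finite_toSet
      _ = F.card := Set.ncard_coe_finset F
      _ ≤ (w + 1) * d := hcardF
  · intro u hu
    by_contra hlt
    have hud : G.dist v₀ u < n := Nat.lt_of_not_le hlt
    exact hu (hBE u (Or.inl hud))
  · refine Set.infinite_of_injective_forall_mem
      (f := fun m : ℕ => γ (i₀ + m)) (fun m m' hmm => ?_) (fun m => ?_)
    · have := hγinj hmm
      omega
    · exact ⟨⟨i₀ + m, rfl⟩, hCEc (htailC (i₀ + m) (by omega))⟩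
end

section
/- Let Γ be a connected graph of finite treewidth and uniformly bounded vertex degree. Then Γ is accessible, i.e., there exists k ∈ ℕ such that for every bi-infinite simple path α in Γ, either C(α) = ∅ or C(α) contains a k-cut. -/
open Pointwise

universe u

namespace AccessAux
variable {V : Type u} (G : SimpleGraph V)

/-- One step of a walk confined to `W`. -/
def Step (W : Set V) (x y : V) : Prop := G.Adj x y ∧ x ∈ W ∧ y ∈ W

/-- Reachability within `W` (the start is allowed to be outside `W`). -/
def Reach (W : Set V) : V → V → Prop := Relation.ReflTransGen (Step G W)

variable {G}

theorem Reach.refl {W : Set V} {x : V} : Reach G W x x := Relation.ReflTransGen.refl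

theorem Reach.trans {W : Set V} {x y z : V} (h : Reach G W x y) (h' : Reach G W y z) :
    Reach G W x z := Relation.ReflTransGen.trans h h'

theorem Reach.symm {W : Set V} {x y : V} (h : Reach G W x y) : Reach G W y x := by
  have hs : Std.Symm (Step G W) := ⟨by rintro a b ⟨hadj, ha, hb⟩; exact ⟨hadj.symm, hb, ha⟩⟩
  exact Relation.ReflTransGen.stdSymm.symm _ _ h

theorem Reach.tail' {W : Set V} {x y z : V} (h : Reach G W x y) (hadj : G.Adj y z)
    (hy : y ∈ W) (hz : z ∈ W) : Reach G W x z :=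
  Relation.ReflTransGen.tail h ⟨hadj, hy, hz⟩

theorem reach_mono {W W' : Set V} (hW : W ⊆ W') {x y : V} (h : Reach G W x y) :
    Reach G W' x y := by
  induction h with
  | refl => exact Reach.refl
  | tail _ st ih => exact ih.tail ⟨st.1, hW st.2.1, hW st.2.2⟩

theorem reach_mem {W : Set V} {x y : V} (hx : x ∈ W) (h : Reach G W x y) : y ∈ W := by
  induction h with
  | refl => exact hx
  | tail _ st _ => exact st.2.2

/-- The class of `b` under `Reach`. -/
def rcls (G : SimpleGraph V) (W : Set V) (b : V) : Set V := {y | Reach G W b y}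

theorem mem_rcls_self {W : Set V} {b : V} : b ∈ rcls G W b := Reach.refl

theorem rcls_subset {W : Set V} {b : V} (hb : b ∈ W) : rcls G W b ⊆ W :=
  fun _ h => reach_mem hb h

theorem rcls_eq_of_mem {W : Set V} {b c : V} (hc : c ∈ rcls G W b) :
    rcls G W c = rcls G W b := by
  ext y; exact ⟨fun h => (hc : Reach G W b c).trans h, fun h => (Reach.symm hc).trans h⟩

/-- A reach within `W` is in fact a reach within the class. -/
theorem reach_rcls {W : Set V} {b y : V} (h : Reach G W b y) :
    Reach G (rcls G W b) b y := by
  induction h with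
  | refl => exact Reach.refl
  | @tail c d h' st ih => exact ih.tail ⟨st.1, h', h'.tail st⟩

theorem reach_of_walk {W : Set V} : ∀ {x y : V} (w : G.Walk x y),
    (∀ z ∈ w.support, z ∈ W) → Reach G W x y := by
  intro x y w
  induction w with
  | nil => intro _; exact Reach.refl
  | @cons a c d h p ih =>
      intro hs
      refine Relation.ReflTransGen.head ⟨h, ?_, ?_⟩ (ih fun z hz => hs z (by simp [hz]))
      · exact hs a (by simp)
      · exact hs c (by simp)

theorem exists_walk_of_reach {W : Set V} {x y : V} (h : Reach G W x y) :
    ∃ w : G.Walk x y, ∀ z ∈ w.support, z ∈ insert x W := by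
  induction h with
  | refl => exact ⟨SimpleGraph.Walk.nil, by simp⟩
  | @tail c d h' st ih =>
      obtain ⟨w, hw⟩ := ih
      refine ⟨w.concat st.1, fun z hz => ?_⟩
      rw [SimpleGraph.Walk.support_concat] at hz
      rcases List.mem_append.mp hz with h1 | h2
      · exact hw z h1
      · simp at h2; subst h2; exact Set.mem_insert_iff.mpr (Or.inr st.2.2)

theorem reach_of_induce_reachable {S : Set V} {x y : ↥S}
    (h : (G.induce S).Reachable x y) : Reach G S x.1 y.1 := by
  obtain ⟨w⟩ := h
  induction w with
  | nil => exact Reach.refl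
  | @cons a c d h p ih => exact Relation.ReflTransGen.head ⟨h, a.2, c.2⟩ ih

theorem induce_reachable_of_reach {W : Set V} {x y : V} (hx : x ∈ W)
    (h : Reach G W x y) : ∀ (hy : y ∈ W), (G.induce W).Reachable ⟨x, hx⟩ ⟨y, hy⟩ := by
  induction h with
  | refl => intro _; rfl
  | @tail c d h' st ih =>
      intro hy
      exact (ih st.2.1).trans (SimpleGraph.Adj.reachable (by exact st.1))

/-- From any walk ending at `t` and starting elsewhere we find a neighbour of `t`
reachable from the start while avoiding `t`. -/
theorem exists_adj_reach {t : V} : ∀ {a : V} (_ : G.Walk a t), a ≠ t →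
    ∃ s, G.Adj t s ∧ Reach G {t}ᶜ a s := by
  intro a w
  induction w with
  | nil => intro h; exact absurd rfl h
  | @cons a c d h p ih =>
      intro hat
      by_cases hct : c = d
      · subst hct; exact ⟨a, (h.symm : G.Adj c a), Reach.refl⟩
      · obtain ⟨s, hs, hr⟩ := ih hct
        exact ⟨s, hs, Relation.ReflTransGen.head ⟨h, hat, hct⟩ hr⟩

theorem tree_no_double_reach {t t' c : V} (htree : G.IsTree) (hadj : G.Adj t t')
    (hct : c ≠ t) (hct' : c ≠ t')
    (h1 : Reach G {t}ᶜ c t') (h2 : Reach G {t'}ᶜ c t) : False := by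
  haveI := Classical.decEq V
  obtain ⟨w1, hw1'⟩ := exists_walk_of_reach h1
  obtain ⟨w2, hw2'⟩ := exists_walk_of_reach h2
  have hw1 : ∀ z ∈ w1.support, z ≠ t := by
    intro z hz hzt
    subst hzt
    rcases Set.mem_insert_iff.mp (hw1' z hz) with h | h
    · exact hct h.symm
    · exact h rfl
  have hw2 : ∀ z ∈ w2.support, z ≠ t' := by
    intro z hz hzt
    subst hzt
    rcases Set.mem_insert_iff.mp (hw2' z hz) with h | h
    · exact hct' h.symm
    · exact h rfl
  have huniq := htree.existsUnique_path t' c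
  set p1 : G.Walk t' c := (w1.reverse.toPath : G.Path t' c).1 with hp1def
  have hp1path : p1.IsPath := (w1.reverse.toPath).2
  have hp1 : ∀ z ∈ p1.support, z ≠ t := by
    intro z hz
    have := SimpleGraph.Walk.support_toPath_subset w1.reverse hz
    rw [SimpleGraph.Walk.support_reverse] at this
    exact hw1 z (List.mem_reverse.mp this)
  set p2 : G.Walk t' c := SimpleGraph.Walk.cons hadj.symm (w2.reverse.toPath : G.Path t c).1
    with hp2def
  have hp2path : p2.IsPath := by
    refine SimpleGraph.Walk.IsPath.cons (w2.reverse.toPath).2 ?_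
    intro hmem
    have := SimpleGraph.Walk.support_toPath_subset w2.reverse hmem
    rw [SimpleGraph.Walk.support_reverse] at this
    exact hw2 t' (List.mem_reverse.mp this) rfl
  have heq : p2 = p1 := huniq.unique hp2path hp1path
  have ht : t ∈ p2.support := by rw [hp2def]; simp
  rw [heq] at ht
  exact hp1 t ht rfl

theorem boundary_card_bound {G : SimpleGraph V} (S : Set V) (hS : S.Finite) (d : ℕ)
    (hd : ∀ v : V, (G.neighborSet v).Finite ∧ (G.neighborSet v).ncard ≤ d) :
    {p : V × V | G.Adj p.1 p.2 ∧ p.2 ∈ S}.Finite ∧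
    {p : V × V | G.Adj p.1 p.2 ∧ p.2 ∈ S}.ncard ≤ S.ncard * d := by
  haveI := Classical.decEq V
  set E := {p : V × V | G.Adj p.1 p.2 ∧ p.2 ∈ S} with hE
  set F : Finset (V × V) :=
    hS.toFinset.biUnion (fun v => (hd v).1.toFinset.image fun u => (u, v)) with hF
  have hsub : E ⊆ ↑F := by
    rintro ⟨u, v⟩ ⟨hadj, hv⟩
    simp only [hF, Finset.coe_biUnion, Set.mem_iUnion, Finset.mem_coe, Finset.mem_image]
    exact ⟨v, by simpa [Set.Finite.mem_toFinset] using hv,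
      by simp [Set.Finite.mem_toFinset, SimpleGraph.mem_neighborSet, hadj.symm]⟩
  have hfin : E.Finite := Set.Finite.subset (F.finite_toSet) hsub
  refine ⟨hfin, ?_⟩
  calc E.ncard ≤ (↑F : Set (V × V)).ncard := Set.ncard_le_ncard hsub (F.finite_toSet)
    _ = F.card := by rw [Set.ncard_coe_finset]
    _ ≤ ∑ v ∈ hS.toFinset, ((hd v).1.toFinset.image fun u => (u, v)).card :=
        Finset.card_biUnion_le
    _ ≤ ∑ v ∈ hS.toFinset, d := by
        refine Finset.sum_le_sum fun v _ => ?_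
        calc ((hd v).1.toFinset.image fun u => (u, v)).card ≤ (hd v).1.toFinset.card :=
              Finset.card_image_le
          _ = (G.neighborSet v).ncard := (Set.ncard_eq_toFinset_card _ (hd v).1).symm
          _ ≤ d := (hd v).2
    _ = hS.toFinset.card * d := by rw [Finset.sum_const, smul_eq_mul]
    _ = S.ncard * d := by rw [← Set.ncard_eq_toFinset_card _ hS]

end AccessAux
namespace AccessAux
open CFGroups

theorem exists_cut {V : Type u} {G : SimpleGraph V} (hconn : G.Connected) {α : ℤ → V}
    (hinj : Function.Injective α) (hadjα : ∀ i : ℤ, G.Adj (α i) (α (i + 1)))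
    {S : Set V} (hSfin : S.Finite) {d : ℕ}
    (hd : ∀ v : V, (G.neighborSet v).Finite ∧ (G.neighborSet v).ncard ≤ d)
    {M : ℤ} (havoid : ∀ i : ℤ, M ≤ |i| → α i ∉ S)
    (hnr : ¬ Reach G Sᶜ (α M) (α (-M))) :
    ∃ C ∈ cutsSplitting G α, weight G C ≤ S.ncard * d := by
  have hav : ∀ i : ℤ, M ≤ i → α i ∉ S := fun i hi => havoid i (hi.trans (le_abs_self i))
  have havn : ∀ i : ℤ, M ≤ i → α (-i) ∉ S := fun i hi =>
    havoid (-i) (by rw [abs_neg]; exact hi.trans (le_abs_self i))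
  set A : Set V := rcls G Sᶜ (α M) with hAdef
  have hbaseA : α M ∈ Sᶜ := hav M le_rfl
  have hAup : ∀ i : ℤ, M ≤ i → α i ∈ A := by
    refine Int.le_induction ?_ ?_
    · exact mem_rcls_self
    · intro i hi ih
      exact Reach.tail' ih (hadjα i) (hav i hi) (hav (i + 1) (by omega))
  have hdown : ∀ i : ℤ, M ≤ i → Reach G Sᶜ (α (-M)) (α (-i)) := by
    refine Int.le_induction ?_ ?_
    · exact Reach.refl
    · intro i hi ih
      have hA : G.Adj (α (-(i + 1))) (α (-i)) := by
        have := hadjα (-(i + 1))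
        rwa [show (-(i + 1) + 1 : ℤ) = -i by ring] at this
      exact Reach.tail' ih hA.symm (havn i hi) (havn (i + 1) (by omega))
  have hAdown : ∀ i : ℤ, M ≤ i → α (-i) ∉ A := by
    intro i hi hmem
    exact hnr ((hmem : Reach G Sᶜ (α M) (α (-i))).trans (hdown i hi).symm)
  set Q : Set V := rcls G Aᶜ (α (-M)) with hQdef
  have hbaseQ : α (-M) ∈ Aᶜ := hAdown M le_rfl
  have hQsub : Q ⊆ Aᶜ := rcls_subset hbaseQ
  have hQdown : ∀ i : ℤ, M ≤ i → α (-i) ∈ Q := by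
    refine Int.le_induction ?_ ?_
    · exact mem_rcls_self
    · intro i hi ih
      have hA : G.Adj (α (-(i + 1))) (α (-i)) := by
        have := hadjα (-(i + 1))
        rwa [show (-(i + 1) + 1 : ℤ) = -i by ring] at this
      exact Reach.tail' ih hA.symm (hAdown i hi) (hAdown (i + 1) (by omega))
  have hAQ : ∀ x ∈ A, x ∉ Q := fun x hx hq => hQsub hq hx
  have hAsubQc : A ⊆ Qᶜ := fun x hx => hAQ x hx
  have hCc : (Qᶜ)ᶜ = Q := compl_compl Q
  -- connectivity of the complement side
  have H1 : ∀ x ∈ A, Reach G Qᶜ (α M) x := fun x hx =>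
    reach_mono hAsubQc (reach_rcls hx)
  have key : ∀ (x y : V) (_ : G.Walk x y), y = α M → x ∉ Q → Reach G Qᶜ x (α M) := by
    intro x y w
    induction w with
    | nil => rintro rfl _; exact Reach.refl
    | @cons a c d h p ih =>
        intro hy ha
        by_cases haA : a ∈ A
        · exact (H1 a haA).symm
        · have hc : c ∉ Q := by
            intro hcQ
            exact ha (Reach.tail' (hcQ : Reach G Aᶜ (α (-M)) c) h.symm (hQsub hcQ) haA)
          exact Relation.ReflTransGen.head ⟨h, ha, hc⟩ (ih hy hc)
  have hkey : ∀ x ∈ Qᶜ, Reach G Qᶜ x (α M) := by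
    intro x hx
    obtain ⟨w⟩ := hconn.preconnected x (α M)
    exact key x (α M) w rfl hx
  have hαMQc : α M ∈ Qᶜ := hAsubQc (hAup M le_rfl)
  have hconnQc : (G.induce Qᶜ).Connected := by
    rw [SimpleGraph.connected_iff]
    refine ⟨?_, ⟨⟨α M, hαMQc⟩⟩⟩
    rintro ⟨x, hx⟩ ⟨y, hy⟩
    exact (induce_reachable_of_reach hx (hkey x hx) hαMQc).trans
      (induce_reachable_of_reach hy (hkey y hy) hαMQc).symm
  have hconnQ : (G.induce Q).Connected := by
    rw [SimpleGraph.connected_iff]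
    refine ⟨?_, ⟨⟨α (-M), mem_rcls_self⟩⟩⟩
    rintro ⟨x, hx⟩ ⟨y, hy⟩
    have hx' : Reach G Q (α (-M)) x := reach_rcls hx
    have hy' : Reach G Q (α (-M)) y := reach_rcls hy
    exact (induce_reachable_of_reach (mem_rcls_self) hx' hx).symm.trans
      (induce_reachable_of_reach (mem_rcls_self) hy' hy)
  -- edge boundary
  have hEB : edgeBoundary G Qᶜ ⊆ {p : V × V | G.Adj p.1 p.2 ∧ p.2 ∈ S} := by
    rintro ⟨u, v⟩ ⟨huv, hu, hv⟩
    rw [Set.mem_compl_iff, not_not] at hv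
    refine ⟨huv, ?_⟩
    have huA : u ∈ A := by
      by_contra huA
      exact hu (Reach.tail' (hv : Reach G Aᶜ (α (-M)) v) huv.symm (hQsub hv) huA)
    by_contra hvS
    exact hQsub hv (Reach.tail' (huA : Reach G Sᶜ (α M) u) huv
      (rcls_subset hbaseA huA) hvS)
  obtain ⟨hESfin, hEScard⟩ := boundary_card_bound S hSfin d hd
  have hEBfin : (edgeBoundary G Qᶜ).Finite := hESfin.subset hEB
  have hwt : weight G Qᶜ ≤ S.ncard * d :=
    le_trans (Set.ncard_le_ncard hEB hESfin) hEScard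
  -- the two infinite sides
  have hInf1 : (Set.range α ∩ Qᶜ).Infinite := by
    refine Set.Infinite.mono ?_ ((Set.Ici_infinite M).image (hinj.injOn))
    rintro _ ⟨i, hi, rfl⟩
    exact ⟨Set.mem_range_self i, hAsubQc (hAup i hi)⟩
  have hInf2 : (Set.range α ∩ (Qᶜ)ᶜ).Infinite := by
    rw [hCc]
    have hinj2 : Function.Injective (fun i : ℤ => α (-i)) :=
      fun i j h => by have := hinj h; omega
    refine Set.Infinite.mono ?_ ((Set.Ici_infinite M).image (hinj2.injOn))
    rintro _ ⟨i, hi, rfl⟩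
    exact ⟨Set.mem_range_self (-i), hQdown i hi⟩
  refine ⟨Qᶜ, ⟨⟨⟨α M, hαMQc⟩, ⟨α (-M), by rw [hCc]; exact mem_rcls_self⟩, hconnQc, ?_, hEBfin⟩,
    hInf1, hInf2⟩, hwt⟩
  rw [hCc]
  exact hconnQ

end AccessAux
open CFGroups Pointwise AccessAux in
/-- A connected graph of finite treewidth and uniformly bounded degree
is accessible. -/
theorem finite_treewidth_accessible
    {V : Type u} (G : SimpleGraph V) (hconn : G.Connected)
    (htw : CFGroups.FiniteTreewidth G) (hdeg : CFGroups.UnifBoundedDegree G) :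
    CFGroups.Accessible G := by
  classical
  obtain ⟨w, T, tr, X, htd, hbags⟩ := htw
  obtain ⟨d, hd⟩ := hdeg
  refine ⟨(w + 1) * d, ?_⟩
  intro α hα hCne
  obtain ⟨hinj, hadjα⟩ := hα
  -- avoidance thresholds for every bag
  have hMex : ∀ t : T, ∃ M : ℤ, ∀ i : ℤ, M ≤ |i| → α i ∉ X t := by
    intro t
    have hfin : {i : ℤ | α i ∈ X t}.Finite := (hbags t).1.preimage hinj.injOn
    obtain ⟨B, hB⟩ := (hfin.image (fun i => |i|)).bddAbove
    refine ⟨B + 1, fun i hi hmem => ?_⟩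
    have h1 : |i| ≤ B := hB ⟨i, hmem, rfl⟩
    omega
  choose M hMav using hMex
  choose bag hbag using htd.2.1
  by_cases hsep : ∃ t : T, ¬ Reach G (X t)ᶜ (α (M t)) (α (-(M t)))
  · obtain ⟨t, hnr⟩ := hsep
    obtain ⟨C, hC, hwt⟩ := exists_cut hconn hinj hadjα (hbags t).1 hd (hMav t) hnr
    exact ⟨C, hC, hwt.trans (Nat.mul_le_mul_right d (hbags t).2)⟩
  push_neg at hsep
  exfalso
  obtain ⟨C₀, hC₀cut, hC₀inf1, hC₀inf2⟩ := hCne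
  have hEBfin : (edgeBoundary G C₀).Finite := hC₀cut.2.2.2.2
  set F := vertexBoundary G C₀ with hF
  have hFfin : F.Finite := by
    have hsub : F ⊆ (Prod.fst '' edgeBoundary G C₀) ∪ (Prod.snd '' edgeBoundary G C₀) := by
      rintro u ⟨v, huv, h | h⟩
      · exact Or.inl ⟨(u, v), ⟨huv, h.1, h.2⟩, rfl⟩
      · exact Or.inr ⟨(v, u), ⟨huv.symm, h.1, h.2⟩, rfl⟩
    exact ((hEBfin.image _).union (hEBfin.image _)).subset hsub
  -- crossings of the boundary by α are finite
  have hCr : {i : ℤ | ¬ (α i ∈ C₀ ↔ α (i + 1) ∈ C₀)}.Finite := by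
    have hfinj : Function.Injective (fun i : ℤ => s(α i, α (i + 1))) := by
      intro i j hij
      simp only [Sym2.eq_iff] at hij
      rcases hij with ⟨h1, _⟩ | ⟨h1, h2⟩
      · exact hinj h1
      · have e1 := hinj h1; have e2 := hinj h2; omega
    have himg : {i : ℤ | ¬ (α i ∈ C₀ ↔ α (i + 1) ∈ C₀)} ⊆
        (fun i : ℤ => s(α i, α (i + 1))) ⁻¹'
          ((fun p : V × V => s(p.1, p.2)) '' edgeBoundary G C₀ ∪
           (fun p : V × V => s(p.2, p.1)) '' edgeBoundary G C₀) := by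
      intro i hi
      by_cases h1 : α i ∈ C₀
      · have h2 : α (i + 1) ∉ C₀ := fun h => hi (iff_of_true h1 h)
        exact Or.inl ⟨(α i, α (i + 1)), ⟨hadjα i, h1, h2⟩, rfl⟩
      · have h2 : α (i + 1) ∈ C₀ := by by_contra h; exact hi (iff_of_false h1 h)
        exact Or.inr ⟨(α (i + 1), α i), ⟨(hadjα i).symm, h2, h1⟩, rfl⟩
    exact (((hEBfin.image _).union (hEBfin.image _)).preimage hfinj.injOn).subset himg
  obtain ⟨N, hN1, hNcr⟩ : ∃ N : ℤ, 1 ≤ N ∧ ∀ i : ℤ, N ≤ |i| →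
      (α i ∈ C₀ ↔ α (i + 1) ∈ C₀) := by
    obtain ⟨B, hB⟩ := (hCr.image (fun i => |i|)).bddAbove
    refine ⟨max (B + 1) 1, le_max_right _ _, fun i hi => ?_⟩
    by_contra h
    have h1 : |i| ≤ B := hB ⟨i, h, rfl⟩
    have h2 : B + 1 ≤ max (B + 1) 1 := le_max_left _ _
    omega
  have hup : ∀ i : ℤ, N ≤ i → (α i ∈ C₀ ↔ α N ∈ C₀) := by
    refine Int.le_induction ?_ ?_
    · exact Iff.rfl
    · intro i hi ih
      exact (hNcr i (hi.trans (le_abs_self i))).symm.trans ih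
  have hdn : ∀ i : ℤ, N ≤ i → (α (-i) ∈ C₀ ↔ α (-N) ∈ C₀) := by
    refine Int.le_induction ?_ ?_
    · exact Iff.rfl
    · intro i hi ih
      have h := hNcr (-(i + 1)) (by rw [abs_neg, abs_of_pos (by omega)]; omega)
      rw [show (-(i + 1) + 1 : ℤ) = -i by ring] at h
      exact h.trans ih
  obtain ⟨D, hDp, hDm, hDcross⟩ : ∃ D : Set V, (∀ i : ℤ, N ≤ i → α i ∈ D) ∧
      (∀ i : ℤ, N ≤ i → α (-i) ∉ D) ∧
      (∀ u v : V, G.Adj u v → u ∈ D → v ∉ D → u ∈ F) := by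
    by_cases hP : α N ∈ C₀
    · by_cases hPl : α (-N) ∈ C₀
      · exfalso
        have hsub : Set.range α ∩ C₀ᶜ ⊆ α '' Set.Ioo (-N) N := by
          rintro x ⟨⟨i, rfl⟩, hx⟩
          refine ⟨i, ⟨?_, ?_⟩, rfl⟩
          · by_contra h
            push_neg at h
            have := (hdn (-i) (by omega)).mpr hPl
            rw [neg_neg] at this
            exact hx this
          · by_contra h
            push_neg at h
            exact hx ((hup i (by omega)).mpr hP)
        exact hC₀inf2 (((Set.finite_Ioo _ _).image α).subset hsub)
      · refine ⟨C₀, fun i hi => (hup i hi).mpr hP, fun i hi h => hPl ((hdn i hi).mp h),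
          fun u v huv hu hv => ⟨v, huv, Or.inl ⟨hu, hv⟩⟩⟩
    · by_cases hPl : α (-N) ∈ C₀
      · refine ⟨C₀ᶜ, fun i hi h => hP ((hup i hi).mp h),
          fun i hi h => h ((hdn i hi).mpr hPl),
          fun u v huv hu hv => ⟨v, huv, Or.inr ⟨not_not.mp hv, hu⟩⟩⟩
      · exfalso
        have hsub : Set.range α ∩ C₀ ⊆ α '' Set.Ioo (-N) N := by
          rintro x ⟨⟨i, rfl⟩, hx⟩
          refine ⟨i, ⟨?_, ?_⟩, rfl⟩
          · by_contra h
            push_neg at h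
            have h2 : α (- -i) ∈ C₀ := by rwa [neg_neg]
            exact hPl ((hdn (-i) (by omega)).mp h2)
          · by_contra h
            push_neg at h
            exact hP ((hup i (by omega)).mp hx)
        exact hC₀inf1 (((Set.finite_Ioo _ _).image α).subset hsub)
  -- per-bag avoidance and tails
  set K : T → Set V := fun t => rcls G (X t)ᶜ (α (M t)) with hK
  have havt : ∀ (t : T) (i : ℤ), M t ≤ i → α i ∉ X t :=
    fun t i hi => hMav t i (hi.trans (le_abs_self i))
  have havtn : ∀ (t : T) (i : ℤ), M t ≤ i → α (-i) ∉ X t :=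
    fun t i hi => hMav t (-i) (by rw [abs_neg]; exact hi.trans (le_abs_self i))
  have hKup : ∀ (t : T) (i : ℤ), M t ≤ i → α i ∈ K t := by
    intro t
    refine Int.le_induction ?_ ?_
    · exact mem_rcls_self
    · intro i hi ih
      exact Reach.tail' ih (hadjα i) (havt t i hi) (havt t (i + 1) (by omega))
  have hKdn : ∀ (t : T) (i : ℤ), M t ≤ i → α (-i) ∈ K t := by
    intro t
    refine Int.le_induction ?_ ?_
    · exact hsep t
    · intro i hi ih
      have hA : G.Adj (α (-(i + 1))) (α (-i)) := by
        have h := hadjα (-(i + 1))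
        rwa [show (-(i + 1) + 1 : ℤ) = -i by ring] at h
      exact Reach.tail' ih hA.symm (havtn t i hi) (havtn t (i + 1) (by omega))
  set bt : T → T := fun t => bag (α (M t)) with hbt
  set β : T → Set T := fun t => rcls tr {t}ᶜ (bt t) with hβ
  have hbtne : ∀ t : T, α (M t) ∉ X t := fun t => havt t (M t) le_rfl
  have hbtmem : ∀ t : T, bt t ∈ ({t}ᶜ : Set T) := by
    intro t h
    rw [Set.mem_singleton_iff] at h
    have h2 : α (M t) ∈ X (bt t) := hbag _
    rw [h] at h2
    exact hbtne t h2
  have hβsub : ∀ t : T, β t ⊆ ({t}ᶜ : Set T) := fun t => rcls_subset (hbtmem t)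
  have hbags_reach : ∀ (v : V) (t b b' : T), v ∉ X t → v ∈ X b → v ∈ X b' →
      Reach tr {t}ᶜ b b' := by
    intro v t b b' hvt hvb hvb'
    have hr := (htd.2.2.2 v).preconnected ⟨b, hvb⟩ ⟨b', hvb'⟩
    refine reach_mono ?_ (reach_of_induce_reachable hr)
    intro s hs
    simp only [Set.mem_compl_iff, Set.mem_singleton_iff]
    rintro rfl
    exact hvt hs
  have hclaim1 : ∀ (t : T) (v : V), Reach G (X t)ᶜ (α (M t)) v →
      ∀ b', v ∈ X b' → b' ∈ β t := by
    intro t v hv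
    induction hv with
    | refl =>
        intro b' hb'
        exact hbags_reach (α (M t)) t (bt t) b' (hbtne t) (hbag (α (M t))) hb'
    | @tail c dd hcd st ih =>
        intro b' hb'
        obtain ⟨b₀, hb₀1, hb₀2⟩ := htd.2.2.1 c dd st.1
        exact (ih b₀ hb₀1 : Reach tr {t}ᶜ (bt t) b₀).trans
          (hbags_reach dd t b₀ b' st.2.2 hb₀2 hb')
  have hclaim2 : ∀ t : T, ∃ s, tr.Adj t s ∧ s ∈ β t := by
    intro t
    have hne : bt t ≠ t := fun h => hbtmem t (Set.mem_singleton_iff.mpr h)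
    obtain ⟨wk⟩ := (SimpleGraph.IsTree.isConnected htd.1).preconnected (bt t) t
    exact exists_adj_reach wk hne
  choose nxt hnxtAdj hnxtβ using hclaim2
  have hcommon : ∀ t t' : T, ∃ c : T, c ∈ β t ∧ c ∈ β t' := by
    intro t t'
    refine ⟨bag (α (max (M t) (M t'))), ?_, ?_⟩
    · exact hclaim1 t _ (hKup t _ (le_max_left _ _)) _ (hbag _)
    · exact hclaim1 t' _ (hKup t' _ (le_max_right _ _)) _ (hbag _)
  have hnot : ∀ t : T, t ∉ β (nxt t) := by
    intro t hmem
    obtain ⟨c, hc1, hc2⟩ := hcommon t (nxt t)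
    have hcne1 : c ≠ t := fun h => hβsub t hc1 (Set.mem_singleton_iff.mpr h)
    have hcne2 : c ≠ nxt t := fun h => hβsub (nxt t) hc2 (Set.mem_singleton_iff.mpr h)
    exact tree_no_double_reach htd.1 (hnxtAdj t) hcne1 hcne2
      ((Reach.symm hc1).trans (hnxtβ t)) ((Reach.symm hc2).trans hmem)
  have hnested : ∀ t : T, β (nxt t) ⊆ β t := by
    intro t x hx
    obtain ⟨c, hc1, hc2⟩ := hcommon t (nxt t)
    have hsub2 : β (nxt t) ⊆ ({t}ᶜ : Set T) := by
      intro z hz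
      simp only [Set.mem_compl_iff, Set.mem_singleton_iff]
      intro heq
      exact hnot t (heq ▸ hz)
    have hcx : Reach tr (β (nxt t)) c x :=
      (Reach.symm (reach_rcls hc2)).trans (reach_rcls hx)
    exact (hc1 : Reach tr {t}ᶜ (bt t) c).trans (reach_mono hsub2 hcx)
  set tseq : ℕ → T := fun n => nxt^[n] (bag (α 0)) with htseq
  have htseqS : ∀ n : ℕ, tseq (n + 1) = nxt (tseq n) :=
    fun n => Function.iterate_succ_apply' nxt n _
  have hmem_next : ∀ n : ℕ, tseq (n + 1) ∈ β (tseq n) := by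
    intro n; rw [htseqS]; exact hnxtβ _
  have hchain : ∀ m n : ℕ, n ≤ m → β (tseq m) ⊆ β (tseq n) := by
    intro m
    induction m with
    | zero => intro n hn; rw [Nat.le_zero.mp hn]
    | succ m ih =>
        intro n hn
        by_cases h : n = m + 1
        · rw [h]
        · have h1 : β (tseq (m + 1)) ⊆ β (tseq m) := by
            rw [htseqS]; exact hnested _
          exact h1.trans (ih n (by omega))
  by_cases hKF : ∃ t : T, ∀ v ∈ F, v ∉ K t
  · obtain ⟨t, ht⟩ := hKF
    have ha : α (max (M t) N) ∈ K t := hKup t _ (le_max_left _ _)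
    have hb : α (-(max (M t) N)) ∈ K t := hKdn t _ (le_max_left _ _)
    have haD : α (max (M t) N) ∈ D := hDp _ (le_max_right _ _)
    have hbD : α (-(max (M t) N)) ∉ D := hDm _ (le_max_right _ _)
    have hr : Reach G (X t)ᶜ (α (max (M t) N)) (α (-(max (M t) N))) :=
      (Reach.symm ha).trans hb
    have hr2 : Reach G (K t) (α (max (M t) N)) (α (-(max (M t) N))) := by
      have hre := reach_rcls hr
      rwa [rcls_eq_of_mem ha] at hre
    have hstay : ∀ z, Reach G (K t) (α (max (M t) N)) z → z ∈ D := by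
      intro z hz
      induction hz with
      | refl => exact haD
      | @tail c dd hcd st ih =>
          by_contra hdd
          exact ht c (hDcross c dd st.1 ih hdd) st.2.1
    exact hbD (hstay _ hr2)
  · push_neg at hKF
    have hpig : ∃ v ∈ F, {n : ℕ | v ∈ K (tseq n)}.Infinite := by
      by_contra hfin
      push_neg at hfin
      have huniv : (Set.univ : Set ℕ) ⊆ ⋃ v ∈ F, {n : ℕ | v ∈ K (tseq n)} := by
        intro n _
        obtain ⟨v, hv1, hv2⟩ := hKF (tseq n)
        exact Set.mem_biUnion hv1 hv2
      have : (Set.univ : Set ℕ).Finite :=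
        (Set.Finite.biUnion hFfin fun v hv => hfin v hv).subset huniv
      exact Set.infinite_univ this
    obtain ⟨v, hvF, hvinf⟩ := hpig
    have hbv_all : ∀ n : ℕ, bag v ∈ β (tseq n) := by
      intro n
      obtain ⟨m, hm1, hm2⟩ := hvinf.exists_gt n
      exact hchain m n (le_of_lt hm2) (hclaim1 (tseq m) v hm1 (bag v) (hbag v))
    have hne0 : bag v ≠ tseq 0 := fun h => hβsub (tseq 0) (hbv_all 0) (Set.mem_singleton_iff.mpr h)
    obtain ⟨ω⟩ := (SimpleGraph.IsTree.isConnected htd.1).preconnected (bag v) (tseq 0)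
    have hsupp : ∀ n : ℕ, tseq n ∈ ω.support := by
      intro n
      by_contra hns
      have hreach : Reach tr {tseq n}ᶜ (bag v) (tseq 0) := by
        refine reach_of_walk ω fun z hz => ?_
        simp only [Set.mem_compl_iff, Set.mem_singleton_iff]
        rintro rfl
        exact hns hz
      have h0 : tseq 0 ∈ β (tseq n) := (hbv_all n : Reach tr _ _ _).trans hreach
      exact hβsub (tseq 0) (hchain n 0 (Nat.zero_le n) h0) (Set.mem_singleton_iff.mpr rfl)
    have htinj : Function.Injective tseq := by
      intro m n h
      by_contra hne
      have hdist : ∀ a b : ℕ, b < a → tseq a ≠ tseq b := by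
        intro a b hba heq
        have h1 : tseq a ∈ β (tseq b) := by
          obtain ⟨a', rfl⟩ : ∃ a', a = a' + 1 := ⟨a - 1, by omega⟩
          exact hchain a' b (by omega) (hmem_next a')
        rw [heq] at h1
        exact hβsub (tseq b) h1 (Set.mem_singleton_iff.mpr rfl)
      rcases lt_or_gt_of_ne hne with h' | h'
      · exact hdist n m h' h.symm
      · exact hdist m n h' h
    have hrinf : (Set.range tseq).Infinite := Set.infinite_range_of_injective htinj
    have hsub : Set.range tseq ⊆ {z | z ∈ ω.support} := by
      rintro _ ⟨n, rfl⟩; exact hsupp n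
    exact hrinf ((ω.support.finite_toSet).subset hsub)
end
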